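/- arXiv:2201.03488 — 6 statements merged into one kernel-verified Lean document; each statement's English description precedes it below -/
import Mathlib

section
/- Let 𝔯 be a complete, separated, right linear topological ring. Then the following two conditions are equivalent: (i) the right 𝔯-module 𝔯, viewed as a topological right 𝔯-module, is isomorphic (by a right 𝔯-module isomorphism that is also a homeomorphism) to a topological product ∏_{z∈Z} Q_z of complete separated topological right 𝔯-modules Q_z (with the product topology), each of which has a local endomorphism ring; (ii) there exists a set Z and a zero-convergent family (e_z)_{z∈Z} of pairwise orthogonal local idempotents in 𝔯 such that ∑_{z∈Z} e_z = 1 in 𝔯. -/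
open Filter MulOpposite

universe u

/-- The corner ring `eRe` of an idempotent `e` is a local ring: `e` is idempotent, nonzero,
and every element `exe` of the corner ring is invertible in `eRe` (with unit `e`),
or `e - exe` is. -/
def IsLocalIdempotent {R : Type*} [Ring R] (e : R) : Prop :=
  IsIdempotentElem e ∧ e ≠ 0 ∧
    ∀ x : R,
      (∃ y : R, e * x * e * (e * y * e) = e ∧ e * y * e * (e * x * e) = e) ∨
      (∃ y : R, (e - e * x * e) * (e * y * e) = e ∧ e * y * e * (e - e * x * e) = e)

/-- Open right ideals form a base of neighborhoods of zero. -/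
def IsRightLinearTopology (R : Type u) [Ring R] [TopologicalSpace R] : Prop :=
  ∀ s ∈ nhds (0 : R), ∃ I : Submodule Rᵐᵒᵖ R, IsOpen (I : Set R) ∧ (I : Set R) ⊆ s

/-- A topological ring is topologically semiperfect if there is a zero-convergent family of
pairwise orthogonal local idempotents summing to `1`. -/
def IsTopSemiperfect (R : Type u) [Ring R] [TopologicalSpace R] : Prop :=
  ∃ (Z : Type u) (e : Z → R),
    Filter.Tendsto e Filter.cofinite (nhds 0) ∧
    (∀ z, IsLocalIdempotent (e z)) ∧
    (∀ z w, z ≠ w → e z * e w = 0) ∧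
    HasSum e 1

/-- The topological Jacobson radical: the intersection of all open maximal right ideals. -/
def topJacobson (R : Type u) [Ring R] [TopologicalSpace R] : Set R :=
  ⋂ I ∈ {I : Submodule Rᵐᵒᵖ R | IsOpen (I : Set R) ∧ IsCoatom I}, (I : Set R)

/-- The abstract Jacobson radical: the intersection of all maximal right ideals. -/
def absJacobson (R : Type u) [Ring R] : Set R :=
  ⋂ I ∈ {I : Submodule Rᵐᵒᵖ R | IsCoatom I}, (I : Set R)

/-- A right module is discrete if the annihilator of each element is open. -/
def IsDiscreteModule (R : Type u) [Ring R] [TopologicalSpace R]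
    (N : Type u) [AddCommGroup N] [Module Rᵐᵒᵖ N] : Prop :=
  ∀ n : N, IsOpen {r : R | op r • n = 0}

/-- `N` has a projective cover in the category of all `R₀`-modules. -/
def HasProjCover (R₀ : Type u) [Ring R₀] (N : Type u) [AddCommGroup N] [Module R₀ N] : Prop :=
  ∃ (P : Type u) (_ : AddCommGroup P) (_ : Module R₀ P) (p : P →ₗ[R₀] N),
    Module.Projective R₀ P ∧ Function.Surjective p ∧
      ∀ K : Submodule R₀ P, K ⊔ LinearMap.ker p = ⊤ → K = ⊤

/-- The finite topology on `End_A(M)^op`: the topology of pointwise convergence,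
`M` being discrete; a base of neighborhoods of zero is given by the annihilators of
finite subsets of `M`. -/
def finiteTopologyEnd (A M : Type u) [Ring A] [AddCommGroup M] [Module A M] :
    TopologicalSpace (Module.End A M)ᵐᵒᵖ :=
  TopologicalSpace.induced (fun f (m : M) => f.unop m)
    (@Pi.topologicalSpace M (fun _ => M) (fun _ => ⊥))

/-- The topological Jacobson radical, as an additive subgroup. -/
def topJacobsonAddSubgroup (R : Type u) [Ring R] [TopologicalSpace R] : AddSubgroup R :=
  ⨅ I ∈ {I : Submodule Rᵐᵒᵖ R | IsOpen (I : Set R) ∧ IsCoatom I}, I.toAddSubgroup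
/-- A complete, separated topological right `R`-module: a right `R`-module with a complete
Hausdorff linear topology having a base of neighborhoods of zero consisting of open
submodules, and continuous action map. -/
structure CSTopMod (R : Type u) [Ring R] [TopologicalSpace R] : Type (u + 1) where
  carrier : Type u
  [instAddCommGroup : AddCommGroup carrier]
  [instUniformSpace : UniformSpace carrier]
  [instModule : Module Rᵐᵒᵖ carrier]
  [instUniformAddGroup : IsUniformAddGroup carrier]
  [instT2 : T2Space carrier]
  [instComplete : CompleteSpace carrier]
  [instContinuousSMul : ContinuousSMul Rᵐᵒᵖ carrier]
  openSubmodule_basis : ∀ s ∈ nhds (0 : carrier),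
    ∃ N : Submodule Rᵐᵒᵖ carrier, IsOpen (N : Set carrier) ∧ (N : Set carrier) ⊆ s

attribute [instance] CSTopMod.instAddCommGroup CSTopMod.instUniformSpace CSTopMod.instModule
  CSTopMod.instUniformAddGroup CSTopMod.instT2 CSTopMod.instComplete CSTopMod.instContinuousSMul


set_option maxHeartbeats 1000000
set_option synthInstance.maxHeartbeats 1000000

section Aux
variable {R : Type u} [Ring R]

/-- Left multiplication as a continuous `Rᵐᵒᵖ`-linear map. -/
def mulLeftCLM [TopologicalSpace R] [IsTopologicalRing R] (a : R) : R →L[Rᵐᵒᵖ] R :=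
  { toFun := fun r => a * r
    map_add' := mul_add a
    map_smul' := fun s r => by
      simp only [smul_eq_mul_unop, RingHom.id_apply, mul_assoc]
    cont := continuous_const.mul continuous_id }

/-- `{r | a * r = r}`, a right submodule. -/
def cornerSubmodule (a : R) : Submodule Rᵐᵒᵖ R where
  carrier := {r : R | a * r = r}
  add_mem' := by
    intro x y hx hy
    simp only [Set.mem_setOf_eq] at *
    rw [mul_add, hx, hy]
  zero_mem' := by simp
  smul_mem' := by
    intro s r hr
    simp only [Set.mem_setOf_eq, smul_eq_mul_unop] at *
    rw [← mul_assoc, hr]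

lemma mem_cornerSubmodule_iff (a r : R) : r ∈ cornerSubmodule a ↔ a * r = r := Iff.rfl

lemma cornerSubmodule_isClosed [TopologicalSpace R] [IsTopologicalRing R] [T1Space R] (a : R) :
    IsClosed (cornerSubmodule a : Set R) := by
  have h : (cornerSubmodule a : Set R) = (fun r => a * r - r) ⁻¹' {0} := by
    ext r
    simp [Set.mem_setOf_eq, sub_eq_zero]
    exact Iff.rfl
  rw [h]
  exact IsClosed.preimage (by continuity) isClosed_singleton

lemma subtype_openSubmodule_basis [TopologicalSpace R] (hRL : IsRightLinearTopology R)
    (M : Submodule Rᵐᵒᵖ R) :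
    ∀ s ∈ nhds (0 : M), ∃ N : Submodule Rᵐᵒᵖ M, IsOpen (N : Set M) ∧ (N : Set M) ⊆ s := by
  intro s hs
  rw [nhds_subtype, Filter.mem_comap] at hs
  obtain ⟨t, ht, hts⟩ := hs
  obtain ⟨I, hIo, hIt⟩ := hRL t ht
  refine ⟨I.comap M.subtype, ?_, ?_⟩
  · have : ((I.comap M.subtype : Submodule Rᵐᵒᵖ M) : Set M) = (Subtype.val) ⁻¹' (I : Set R) := rfl
    rw [this]
    exact hIo.preimage continuous_subtype_val
  · intro x hx
    exact hts (hIt hx)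

noncomputable instance submoduleUAG [UniformSpace R] [IsUniformAddGroup R]
    (M : Submodule Rᵐᵒᵖ R) : IsUniformAddGroup M :=
  IsUniformAddGroup.comap M.toAddSubgroup.subtype
end Aux

section Corner
variable {R : Type u} [Ring R] [TopologicalSpace R] [IsTopologicalRing R]

lemma corner_mul_mem {e : R} (he : IsIdempotentElem e) (x r : R) :
    e * x * e * r ∈ cornerSubmodule e := by
  show e * (e * x * e * r) = e * x * e * r
  rw [← mul_assoc, ← mul_assoc, ← mul_assoc, he.eq]

/-- Left multiplication by `e * x * e` restricted to the corner submodule. -/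
def cornerEndo {e : R} (he : IsIdempotentElem e) (x : R) :
    (cornerSubmodule e) →L[Rᵐᵒᵖ] (cornerSubmodule e) :=
  { toFun := fun m => ⟨e * x * e * (m : R), corner_mul_mem he x (m : R)⟩
    map_add' := fun m n => by
      ext
      simp [mul_add]
    map_smul' := fun s m => by
      ext
      simp only [Submodule.coe_smul, smul_eq_mul_unop, RingHom.id_apply, mul_assoc]
    cont := Continuous.subtype_mk (continuous_const.mul continuous_subtype_val) _ }

lemma cornerEndo_apply {e : R} (he : IsIdempotentElem e) (x : R) (m : cornerSubmodule e) :
    (cornerEndo he x m : R) = e * x * e * (m : R) := rfl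

variable {e : R} (hle : IsLocalIdempotent e)
set_option synthInstance.maxHeartbeats 1000000

namespace CornerLocal

noncomputable def εm : cornerSubmodule e := ⟨e, hle.1.eq⟩

/-- The "corner element" of an endomorphism. -/
noncomputable def ψ (f : (cornerSubmodule e) →L[Rᵐᵒᵖ] (cornerSubmodule e)) : R :=
  (f (εm hle) : R)

lemma smul_εm (r : R) : (op r • (εm hle) : cornerSubmodule e) = ⟨e * r, by
    show e * _ = _; rw [← mul_assoc, hle.1.eq]⟩ := by
  ext
  simp [εm, smul_eq_mul_unop]

lemma coe_apply (f : (cornerSubmodule e) →L[Rᵐᵒᵖ] (cornerSubmodule e))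
    (m : cornerSubmodule e) : (f m : R) = ψ hle f * (m : R) := by
  have hm : m = op (m : R) • (εm hle) := by
    ext
    simp only [smul_εm]
    exact m.2.symm
  rw [hm, map_smul]
  simp only [Submodule.coe_smul, smul_eq_mul_unop, unop_op, ψ, εm]
  rw [m.2]

lemma ψ_mul (f g : (cornerSubmodule e) →L[Rᵐᵒᵖ] (cornerSubmodule e)) :
    ψ hle (f * g) = ψ hle f * ψ hle g := by
  show ((f (g (εm hle))) : R) = _
  rw [coe_apply hle f]
  rfl

lemma ψ_one : ψ hle (1 : (cornerSubmodule e) →L[Rᵐᵒᵖ] (cornerSubmodule e)) = e := rfl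

lemma ψ_sub (f g : (cornerSubmodule e) →L[Rᵐᵒᵖ] (cornerSubmodule e)) :
    ψ hle (f - g) = ψ hle f - ψ hle g := rfl

lemma ψ_injective : Function.Injective (ψ hle) := by
  intro f g h
  ext m
  have h2 : (f m : R) = (g m : R) := by
    rw [coe_apply hle f m, h, ← coe_apply hle g m]
  exact congrArg Subtype.val (Subtype.ext h2)

lemma ψ_mem (f : (cornerSubmodule e) →L[Rᵐᵒᵖ] (cornerSubmodule e)) :
    e * ψ hle f = ψ hle f := (f (εm hle)).2

lemma ψ_mul_e (f : (cornerSubmodule e) →L[Rᵐᵒᵖ] (cornerSubmodule e)) :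
    ψ hle f * e = ψ hle f := by
  have : ψ hle (f * 1) = ψ hle f * ψ hle 1 := ψ_mul hle f 1
  rw [mul_one, ψ_one] at this
  exact this.symm

lemma ψ_corner (f : (cornerSubmodule e) →L[Rᵐᵒᵖ] (cornerSubmodule e)) :
    e * ψ hle f * e = ψ hle f := by
  rw [ψ_mem, ψ_mul_e]

lemma ψ_cornerEndo (x : R) : ψ hle (cornerEndo hle.1 x) = e * x * e := by
  show e * x * e * e = e * x * e
  rw [mul_assoc, hle.1.eq]

end CornerLocal

open CornerLocal in
theorem cornerSubmodule_isLocalRing {e : R} (hle : IsLocalIdempotent e) :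
    IsLocalRing ((cornerSubmodule e) →L[Rᵐᵒᵖ] (cornerSubmodule e)) := by
  have hnt : (1 : (cornerSubmodule e) →L[Rᵐᵒᵖ] (cornerSubmodule e)) ≠ 0 := by
    intro h
    apply hle.2.1
    have := congrArg (ψ hle) h
    rw [ψ_one hle] at this
    simpa [ψ] using this
  haveI : Nontrivial ((cornerSubmodule e) →L[Rᵐᵒᵖ] (cornerSubmodule e)) :=
    nontrivial_of_ne _ _ hnt
  constructor
  intro f g hfg
  have hg : g = 1 - f := by rw [← hfg]; abel
  subst hg
  set x := ψ hle f with hx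
  have hfx : e * x * e = ψ hle f := ψ_corner hle f
  rcases hle.2.2 x with ⟨y, h1, h2⟩ | ⟨y, h1, h2⟩
  · left
    refine isUnit_iff_exists.mpr ⟨cornerEndo hle.1 y, ?_, ?_⟩
    · apply ψ_injective hle
      rw [ψ_mul, ψ_cornerEndo, ψ_one, ← hfx]
      exact h1
    · apply ψ_injective hle
      rw [ψ_mul, ψ_cornerEndo, ψ_one, ← hfx]
      exact h2
  · right
    have hψ : ψ hle (1 - f) = e - e * x * e := by
      rw [ψ_sub, ψ_one, hfx]
    refine isUnit_iff_exists.mpr ⟨cornerEndo hle.1 y, ?_, ?_⟩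
    · apply ψ_injective hle
      rw [ψ_mul, ψ_cornerEndo, ψ_one, hψ]
      exact h1
    · apply ψ_injective hle
      rw [ψ_mul, ψ_cornerEndo, ψ_one, hψ]
      exact h2
end Corner

section MP
variable {R : Type u} [Ring R] [UniformSpace R] [IsUniformAddGroup R] [IsTopologicalRing R]
  [T2Space R] [CompleteSpace R]
variable {Z : Type u} [DecidableEq Z] {Q : Z → CSTopMod R}
  (φ : R ≃ₗ[Rᵐᵒᵖ] ((z : Z) → (Q z).carrier))

namespace MPaux

/-- The idempotent family. -/
noncomputable def eF (z : Z) : R := φ.symm (Pi.single z (φ 1 z))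

/-- The corner element of an endomorphism of `Q z`. -/
noncomputable def tF (z : Z) (f : (Q z).carrier →L[Rᵐᵒᵖ] (Q z).carrier) : R :=
  φ.symm (Pi.single z (f (φ 1 z)))

lemma phi_apply (r : R) : φ r = op r • φ 1 := by
  rw [← map_smul]
  congr 1
  simp [smul_eq_mul_unop]

lemma key (z : Z) (f : (Q z).carrier →L[Rᵐᵒᵖ] (Q z).carrier) (r : R) :
    φ.symm (Pi.single z (f (φ r z))) = tF φ z f * r := by
  rw [phi_apply φ r]
  rw [Pi.smul_apply, map_smul, Pi.single_smul, map_smul, smul_eq_mul_unop, unop_op]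
  rfl

lemma key_id (z : Z) (r : R) : φ.symm (Pi.single z (φ r z)) = eF φ z * r :=
  key φ z (ContinuousLinearMap.id Rᵐᵒᵖ (Q z).carrier) r

lemma phi_eF (z : Z) : φ (eF φ z) = Pi.single z (φ 1 z) := by
  rw [eF, LinearEquiv.apply_symm_apply]

lemma eF_idem (z : Z) : IsIdempotentElem (eF φ z) := by
  show eF φ z * eF φ z = eF φ z
  rw [← key_id φ z (eF φ z), phi_eF, Pi.single_eq_same, eF]

lemma eF_orth (z w : Z) (hzw : z ≠ w) : eF φ z * eF φ w = 0 := by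
  rw [← key_id φ z (eF φ w), phi_eF, Pi.single_eq_of_ne hzw, Pi.single_zero, map_zero]

lemma tF_mul (z : Z) (f g : (Q z).carrier →L[Rᵐᵒᵖ] (Q z).carrier) :
    tF φ z (f * g) = tF φ z f * tF φ z g := by
  have h1 : φ (tF φ z g) z = g (φ 1 z) := by
    rw [tF, LinearEquiv.apply_symm_apply, Pi.single_eq_same]
  rw [← key φ z f (tF φ z g), h1]
  rfl

lemma tF_one (z : Z) : tF φ z (1 : (Q z).carrier →L[Rᵐᵒᵖ] (Q z).carrier) = eF φ z := rfl

lemma mem_repr (z : Z) (m : (Q z).carrier) :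
    φ (φ.symm (Pi.single z m)) z = op (φ.symm (Pi.single z m)) • (φ 1 z) := by
  rw [phi_apply φ (φ.symm (Pi.single z m))]
  rfl

lemma tF_injective (z : Z) : Function.Injective (tF φ z) := by
  intro f g h
  have h1 : f (φ 1 z) = g (φ 1 z) := by
    have h2 := congrArg (fun r => φ r z) h
    simp only [tF, LinearEquiv.apply_symm_apply, Pi.single_eq_same] at h2
    exact h2
  ext m
  have h3 : m = op (φ.symm (Pi.single z m)) • (φ 1 z) := by
    rw [← mem_repr φ z m, LinearEquiv.apply_symm_apply, Pi.single_eq_same]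
  rw [h3, map_smul, map_smul, h1]

lemma tF_sub (z : Z) (f g : (Q z).carrier →L[Rᵐᵒᵖ] (Q z).carrier) :
    tF φ z (f - g) = tF φ z f - tF φ z g := by
  rw [tF, ContinuousLinearMap.sub_apply, Pi.single_sub, map_sub]
  rfl

lemma tF_corner (z : Z) (f : (Q z).carrier →L[Rᵐᵒᵖ] (Q z).carrier) :
    eF φ z * tF φ z f = tF φ z f ∧ tF φ z f * eF φ z = tF φ z f := by
  constructor
  · have h := tF_mul φ z 1 f
    rw [one_mul, tF_one] at h
    exact h.symm
  · have h := tF_mul φ z f 1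
    rw [mul_one, tF_one] at h
    exact h.symm

/-- For `x : R`, the corresponding endomorphism of `Q z`. -/
noncomputable def cornerOf (z : Z) (hc : Continuous φ) (hc' : Continuous φ.symm) (a : R) :
    (Q z).carrier →L[Rᵐᵒᵖ] (Q z).carrier :=
  (ContinuousLinearMap.proj (R := Rᵐᵒᵖ) z).comp
    ((⟨φ.toLinearMap, hc⟩ : R →L[Rᵐᵒᵖ] ((z : Z) → (Q z).carrier)).comp
      ((mulLeftCLM a).comp
        ((⟨φ.symm.toLinearMap, hc'⟩ : ((z : Z) → (Q z).carrier) →L[Rᵐᵒᵖ] R).comp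
          ({ toLinearMap := LinearMap.single Rᵐᵒᵖ (fun w => (Q w).carrier) z,
             cont := by show Continuous fun m : (Q z).carrier => Pi.single (M := fun w => (Q w).carrier) z m; exact continuous_single (A := fun w => (Q w).carrier) z } :
            (Q z).carrier →L[Rᵐᵒᵖ] ((z : Z) → (Q z).carrier)))))

lemma tF_cornerOf (z : Z) (hc : Continuous φ) (hc' : Continuous φ.symm) (x : R) :
    tF φ z (cornerOf φ z hc hc' (eF φ z * x * eF φ z)) = eF φ z * x * eF φ z := by
  have h1 : cornerOf φ z hc hc' (eF φ z * x * eF φ z) (φ 1 z) =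
      φ (eF φ z * x * eF φ z) z := by
    show φ ((eF φ z * x * eF φ z) * φ.symm (Pi.single z (φ 1 z))) z = _
    rw [show φ.symm (Pi.single z (φ 1 z)) = eF φ z from rfl, mul_assoc, (eF_idem φ z).eq]
  rw [tF, h1, key_id φ z, ← mul_assoc, ← mul_assoc, (eF_idem φ z).eq]

lemma eF_ne_zero (z : Z) (hLoc : IsLocalRing ((Q z).carrier →L[Rᵐᵒᵖ] (Q z).carrier)) :
    eF φ z ≠ 0 := by
  intro h0
  have hv : φ 1 z = 0 := by
    have h1 := phi_eF φ z
    rw [h0, map_zero] at h1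
    have h2 := congrFun h1 z
    rw [Pi.single_eq_same] at h2
    exact h2.symm
  have hall : ∀ m : (Q z).carrier, m = 0 := by
    intro m
    have h3 : m = op (φ.symm (Pi.single z m)) • (φ 1 z) := by
      rw [← mem_repr φ z m, LinearEquiv.apply_symm_apply, Pi.single_eq_same]
    rw [h3, hv, smul_zero]
  haveI := hLoc.toNontrivial
  have h4 : (1 : (Q z).carrier →L[Rᵐᵒᵖ] (Q z).carrier) = 0 := by
    ext m
    rw [hall m]
    simp
  exact one_ne_zero h4

lemma eF_local (z : Z) (hc : Continuous φ) (hc' : Continuous φ.symm)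
    (hLoc : IsLocalRing ((Q z).carrier →L[Rᵐᵒᵖ] (Q z).carrier)) :
    IsLocalIdempotent (eF φ z) := by
  refine ⟨eF_idem φ z, eF_ne_zero φ z hLoc, fun x => ?_⟩
  set f := cornerOf φ z hc hc' (eF φ z * x * eF φ z) with hf
  have htf : tF φ z f = eF φ z * x * eF φ z := tF_cornerOf φ z hc hc' x
  have hadd : f + (1 - f) = 1 := by abel
  rcases IsLocalRing.isUnit_or_isUnit_of_add_one hadd with hu | hu
  · obtain ⟨u, hu⟩ := hu
    set g := ((u⁻¹ : _) : (Q z).carrier →L[Rᵐᵒᵖ] (Q z).carrier) with hgdef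
    have hfg : f * g = 1 := by rw [← hu]; exact u.mul_inv
    have hgf : g * f = 1 := by rw [← hu]; exact u.inv_mul
    have hg : eF φ z * tF φ z g * eF φ z = tF φ z g := by
      rw [(tF_corner φ z g).1, (tF_corner φ z g).2]
    left
    refine ⟨tF φ z g, ?_, ?_⟩
    · rw [hg, ← htf, ← tF_mul, hfg, tF_one]
    · rw [hg, ← htf, ← tF_mul, hgf, tF_one]
  · obtain ⟨u, hu⟩ := hu
    set g := ((u⁻¹ : _) : (Q z).carrier →L[Rᵐᵒᵖ] (Q z).carrier) with hgdef
    have hfg : (1 - f) * g = 1 := by rw [← hu]; exact u.mul_inv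
    have hgf : g * (1 - f) = 1 := by rw [← hu]; exact u.inv_mul
    have hg : eF φ z * tF φ z g * eF φ z = tF φ z g := by
      rw [(tF_corner φ z g).1, (tF_corner φ z g).2]
    have h1f : tF φ z (1 - f) = eF φ z - eF φ z * x * eF φ z := by
      rw [tF_sub, tF_one, htf]
    right
    refine ⟨tF φ z g, ?_, ?_⟩
    · rw [hg, ← h1f, ← tF_mul, hfg, tF_one]
    · rw [hg, ← h1f, ← tF_mul, hgf, tF_one]

lemma tendsto_single : Tendsto (fun z : Z => Pi.single z (φ 1 z))
    cofinite (nhds (0 : (z : Z) → (Q z).carrier)) := by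
  rw [Filter.tendsto_def]
  intro s hs
  rw [nhds_pi, Filter.mem_pi] at hs
  obtain ⟨I, hIf, t, ht, hts⟩ := hs
  rw [Filter.mem_cofinite]
  apply Set.Finite.subset hIf
  intro z hz
  by_contra hzI
  apply hz
  apply hts
  intro i hi
  have hiz : i ≠ z := fun h => hzI (h ▸ hi)
  show Pi.single (M := fun w => (Q w).carrier) z (φ 1 z) i ∈ t i
  rw [Pi.single_eq_of_ne hiz]
  exact mem_of_mem_nhds (ht i)

lemma tendsto_eF (hc' : Continuous φ.symm) : Tendsto (eF φ) cofinite (nhds (0 : R)) := by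
  have h1 := tendsto_single φ
  have h2 : Tendsto φ.symm (nhds (0 : (z : Z) → (Q z).carrier)) (nhds (0 : R)) := by
    have := hc'.tendsto 0
    rwa [map_zero] at this
  exact h2.comp h1

lemma hasSum_eF (hc' : Continuous φ.symm) : HasSum (eF φ) 1 := by
  have h1 : HasSum (fun z : Z => Pi.single z (φ 1 z)) (φ 1) := by
    rw [Pi.hasSum]
    intro i
    have h2 : (fun z : Z => Pi.single (M := fun w => (Q w).carrier) z (φ 1 z) i) = fun z => if z = i then φ 1 i else 0 := by
      funext z
      by_cases hzi : z = i
      · subst hzi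
        rw [if_pos rfl, Pi.single_eq_same]
      · rw [if_neg hzi, Pi.single_eq_of_ne (Ne.symm hzi)]
    rw [h2]
    exact hasSum_ite_eq i _
  have h3 := h1.map φ.symm.toLinearMap hc'
  have h4 : (⇑φ.symm.toLinearMap ∘ fun z : Z => Pi.single z (φ 1 z)) = eF φ := rfl
  rw [h4] at h3
  rwa [show φ.symm.toLinearMap (φ 1) = 1 by simp] at h3

end MPaux
end MP

theorem topSemiperfect_iff_product_decomposition
    (R : Type u) [Ring R] [UniformSpace R] [IsUniformAddGroup R] [IsTopologicalRing R]
    [T2Space R] [CompleteSpace R] (hRL : IsRightLinearTopology R) :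
    (∃ (Z : Type u) (Q : Z → CSTopMod R),
      (∀ z, IsLocalRing ((Q z).carrier →L[Rᵐᵒᵖ] (Q z).carrier)) ∧
      ∃ φ : R ≃ₗ[Rᵐᵒᵖ] ((z : Z) → (Q z).carrier), Continuous φ ∧ Continuous φ.symm) ↔
    IsTopSemiperfect R := by
  constructor
  · rintro ⟨Z, Q, hLoc, φ, hc, hc'⟩
    haveI := Classical.decEq Z
    exact ⟨Z, MPaux.eF φ, MPaux.tendsto_eF φ hc', fun z => MPaux.eF_local φ z hc hc' (hLoc z),
      MPaux.eF_orth φ, MPaux.hasSum_eF φ hc'⟩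
  · rintro ⟨Z, e, htend, hloc, horth, hsum⟩
    classical
    -- summability of corner families
    have hsummable : ∀ g : Z → R, (∀ z, e z * g z = g z) → Summable g := by
      intro g hg
      rw [summable_iff_vanishing]
      intro s hs
      obtain ⟨I, hIo, hIs⟩ := hRL s hs
      have hfin : ((e ⁻¹' (I : Set R))ᶜ).Finite := by
        have h1 := htend (hIo.mem_nhds I.zero_mem)
        rwa [Filter.mem_map, Filter.mem_cofinite] at h1
      refine ⟨hfin.toFinset, fun u hu => hIs ?_⟩
      show ∑ b ∈ u, g b ∈ (I : Set R)
      refine sum_mem fun b hb => ?_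
      have hbI : e b ∈ I := by
        by_contra hbI
        have hmem : b ∈ hfin.toFinset := by
          rw [Set.Finite.mem_toFinset]
          exact hbI
        exact (Finset.disjoint_left.mp hu hb) hmem
      have h2 := I.smul_mem (op (g b)) hbI
      rwa [smul_eq_mul_unop, unop_op, hg b] at h2
    have hmem' : ∀ (z : Z) (r : R), e z * r ∈ cornerSubmodule (e z) := by
      intro z r
      show e z * (e z * r) = e z * r
      rw [← mul_assoc, (hloc z).1.eq]
    -- the forward linear map
    set toLM : R →ₗ[Rᵐᵒᵖ] ((z : Z) → (cornerSubmodule (e z))) :=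
      { toFun := fun r z => ⟨e z * r, hmem' z r⟩
        map_add' := fun r s => by
          funext z
          exact Subtype.ext (mul_add _ _ _)
        map_smul' := fun s r => by
          funext z
          apply Subtype.ext
          simp [smul_eq_mul_unop, mul_assoc] } with htoLM
    have hSq : ∀ q : (z : Z) → (cornerSubmodule (e z)), Summable (fun z => (q z : R)) :=
      fun q => hsummable _ (fun z => (q z).2)
    have hleft : ∀ r : R, (∑' z, ((toLM r z : R))) = r := by
      intro r
      have h1 : HasSum (fun z => e z * r) r := by
        have h2 := hsum.map (AddMonoidHom.mulRight r) (continuous_mul_right r)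
        simpa [Function.comp_def] using h2
      exact h1.tsum_eq
    have hright : ∀ (q : (z : Z) → (cornerSubmodule (e z))) (w : Z),
        e w * (∑' z, ((q z : R))) = (q w : R) := by
      intro q w
      have h2 : HasSum (fun z => e w * (q z : R)) (e w * ∑' z, ((q z : R))) := by
        have h3 := (hSq q).hasSum.map (AddMonoidHom.mulLeft (e w)) (continuous_mul_left (e w))
        simpa [Function.comp_def] using h3
      have h3 : (fun z => e w * (q z : R)) = fun z => if z = w then (q w : R) else 0 := by
        funext z
        by_cases hzw : z = w
        · subst hzw
          rw [if_pos rfl]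
          exact (q z).2
        · rw [if_neg hzw, ← (q z).2, ← mul_assoc, horth w z (Ne.symm hzw), zero_mul]
      rw [h3] at h2
      exact h2.unique (hasSum_ite_eq w _)
    set φ : R ≃ₗ[Rᵐᵒᵖ] ((z : Z) → (cornerSubmodule (e z))) :=
      { toLM with
        invFun := fun q => ∑' z, ((q z : R))
        left_inv := fun r => hleft r
        right_inv := fun q => by
          funext w
          exact Subtype.ext (hright q w) } with hφ
    refine ⟨Z, fun z =>
      { carrier := (cornerSubmodule (e z))
        instComplete := (cornerSubmodule_isClosed (e z)).completeSpace_coe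
        openSubmodule_basis := subtype_openSubmodule_basis hRL _ },
      fun z => cornerSubmodule_isLocalRing (hloc z), φ, ?_, ?_⟩
    · exact continuous_pi fun z =>
        Continuous.subtype_mk (continuous_const.mul continuous_id) _
    · apply continuous_of_continuousAt_zero φ.symm.toLinearMap
      rw [ContinuousAt, map_zero]
      intro s hs
      obtain ⟨I, hIo, hIs⟩ := hRL s hs
      have hfin : ((e ⁻¹' (I : Set R))ᶜ).Finite := by
        have h1 := htend (hIo.mem_nhds I.zero_mem)
        rwa [Filter.mem_map, Filter.mem_cofinite] at h1
      rw [Filter.mem_map]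
      set U : Set ((z : Z) → (cornerSubmodule (e z))) :=
        {q | ∀ z ∈ hfin.toFinset, (q z : R) ∈ I} with hUdef
      have hUopen : IsOpen U := by
        have : U = ⋂ z ∈ hfin.toFinset,
            ((fun q : (z : Z) → (cornerSubmodule (e z)) => q z) ⁻¹'
              (Subtype.val ⁻¹' (I : Set R))) := by
          ext q
          simp [hUdef]
        rw [this]
        exact isOpen_biInter_finset fun z _ =>
          ((hIo.preimage continuous_subtype_val).preimage (continuous_apply z))
      have hU0 : U ∈ nhds (0 : (z : Z) → (cornerSubmodule (e z))) :=
        hUopen.mem_nhds (fun z _ => by simp)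
      refine Filter.mem_of_superset hU0 ?_
      intro q hq
      apply hIs
      show (∑' z, ((q z : R))) ∈ (I : Set R)
      have hall : ∀ z, (q z : R) ∈ I := by
        intro z
        by_cases hz : z ∈ hfin.toFinset
        · exact hq z hz
        · have hzI : e z ∈ I := by
            rw [Set.Finite.mem_toFinset] at hz
            simpa using hz
          have h2 := I.smul_mem (op ((q z : R))) hzI
          rwa [smul_eq_mul_unop, unop_op, (q z).2] at h2
      have hclosed : IsClosed (I : Set R) :=
        AddSubgroup.isClosed_of_isOpen I.toAddSubgroup hIo
      exact hclosed.mem_of_tendsto (hSq q).hasSum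
        (Filter.Eventually.of_forall fun F => sum_mem fun z _ => hall z)
end

section
/- Let A be an associative unital ring, M a left A-module, and 𝔯 = End_A(M)^op the opposite of the endomorphism ring of M, endowed with the finite topology. Then 𝔯 is topologically semiperfect if and only if M decomposes as a (possibly infinite) direct sum of A-modules each of which has a local endomorphism ring. -/
open Filter MulOpposite

universe u

theorem tendsto_fte_iff {A M : Type u} [Ring A] [AddCommGroup M] [Module A M]
    {α : Type*} {l : Filter α} {g : α → (Module.End A M)ᵐᵒᵖ} {x : (Module.End A M)ᵐᵒᵖ} :
    @Filter.Tendsto _ _ g l (@nhds _ (finiteTopologyEnd A M) x) ↔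
      ∀ m : M, ∀ᶠ a in l, (g a).unop m = x.unop m := by
  letI : TopologicalSpace M := ⊥
  haveI : DiscreteTopology M := ⟨rfl⟩
  rw [show finiteTopologyEnd A M = TopologicalSpace.induced (fun f (m : M) => f.unop m)
      Pi.topologicalSpace from rfl, nhds_induced, Filter.tendsto_comap_iff, tendsto_pi_nhds]
  exact forall_congr' fun m => by rw [nhds_discrete, tendsto_pure]; rfl

section Aux
variable {A M : Type u} [Ring A] [AddCommGroup M] [Module A M]

/-- Extension of an endomorphism of `N` to `M` via a projection `π`. -/
def cmap (N : Submodule A M) (π : M →ₗ[A] N) (g : Module.End A N) : Module.End A M :=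
  N.subtype ∘ₗ (g ∘ₗ π)

variable {N : Submodule A M} {π : M →ₗ[A] N}

theorem cmap_apply (g : Module.End A N) (m : M) : cmap N π g m = (g (π m) : M) := rfl

theorem cmap_mul (hπ : ∀ n : N, π (n : M) = n) (g h : Module.End A N) :
    cmap N π g * cmap N π h = cmap N π (g * h) := by
  apply LinearMap.ext; intro m
  rw [Module.End.mul_apply, cmap_apply, cmap_apply, cmap_apply, hπ, Module.End.mul_apply]

theorem cmap_sub (g h : Module.End A N) :
    cmap N π (g - h) = cmap N π g - cmap N π h := by
  apply LinearMap.ext; intro m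
  simp [cmap_apply]

theorem cmap_inj (hπ : ∀ n : N, π (n : M) = n) {g h : Module.End A N}
    (H : cmap N π g = cmap N π h) : g = h := by
  apply LinearMap.ext; intro n
  have := LinearMap.congr_fun H (n : M)
  rw [cmap_apply, cmap_apply, hπ] at this
  exact Subtype.coe_injective this

theorem cmap_r (X : Module.End A M) :
    cmap N π (π ∘ₗ X ∘ₗ N.subtype) = cmap N π 1 * X * cmap N π 1 := rfl

theorem op_corner (f X : Module.End A M) :
    op f * op X * op f = op (f * X * f) := by
  rw [op_mul, op_mul, mul_assoc]

end Aux

section Aux2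
variable {A M : Type u} [Ring A] [AddCommGroup M] [Module A M]
variable {N : Submodule A M} {π : M →ₗ[A] N}

theorem isLocalIdempotent_of_local (hπ : ∀ n : N, π (n : M) = n)
    (hL : IsLocalRing (Module.End A N)) :
    IsLocalIdempotent (op (cmap N π 1)) := by
  set f : Module.End A M := cmap N π 1 with hf
  have hsand : ∀ g : Module.End A N, op f * op (cmap N π g) * op f = op (cmap N π g) := by
    intro g
    rw [op_corner, hf, cmap_mul hπ, cmap_mul hπ, one_mul, mul_one]
  refine ⟨?_, ?_, ?_⟩
  · show op f * op f = op f
    rw [← op_mul, hf, cmap_mul hπ, one_mul]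
  · have hNn : ∃ n : N, n ≠ 0 := by
      by_contra h
      push_neg at h
      have : (1 : Module.End A N) = 0 := LinearMap.ext fun n => by rw [h n]; simp
      exact one_ne_zero this
    obtain ⟨n, hn⟩ := hNn
    intro h0
    have hf0 : f = 0 := by
      have := congrArg unop h0; simpa using this
    have : f (n : M) = (n : M) := by rw [cmap_apply, Module.End.one_apply, hπ]
    rw [hf0] at this
    exact hn (Subtype.coe_injective (by simpa using this.symm))
  · intro x
    set X : Module.End A M := x.unop with hX
    set a : Module.End A N := π ∘ₗ X ∘ₗ N.subtype with ha
    have hxe : op f * x * op f = op (cmap N π a) := by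
      rw [show x = op X from (op_unop x).symm, op_corner, ha, cmap_r]
    rcases IsLocalRing.isUnit_or_isUnit_of_add_one (a := a) (b := 1 - a) (by abel) with hu | hu
    · obtain ⟨b, hab, hba⟩ := isUnit_iff_exists.mp hu
      refine Or.inl ⟨op (cmap N π b), ?_, ?_⟩
      · rw [hxe, hsand, ← op_mul, cmap_mul hπ, hba, ← hf]
      · rw [hxe, hsand, ← op_mul, cmap_mul hπ, hab, ← hf]
    · obtain ⟨b, hab, hba⟩ := isUnit_iff_exists.mp hu
      have hsub : op f - op f * x * op f = op (cmap N π (1 - a)) := by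
        rw [hxe, cmap_sub, op_sub, hf]
      refine Or.inr ⟨op (cmap N π b), ?_, ?_⟩
      · rw [hsub, hsand, ← op_mul, cmap_mul hπ, hba, ← hf]
      · rw [hsub, hsand, ← op_mul, cmap_mul hπ, hab, ← hf]

end Aux2

section Aux3
variable {A M : Type u} [Ring A] [AddCommGroup M] [Module A M]

theorem isLocalRing_of_isLocalIdempotent (f : Module.End A M)
    (h : IsLocalIdempotent (op f)) :
    IsLocalRing (Module.End A (LinearMap.range f)) := by
  obtain ⟨hidem, hne, hcor⟩ := h
  have hff : f * f = f := op_injective (by rw [op_mul]; exact hidem)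
  set N : Submodule A M := LinearMap.range f with hN
  set π : M →ₗ[A] N := f.codRestrict N (fun m => LinearMap.mem_range_self f m) with hπdef
  have hπ : ∀ n : N, π (n : M) = n := by
    intro n
    obtain ⟨u, hu⟩ := n.2
    apply Subtype.ext
    show f (n : M) = (n : M)
    conv_lhs => rw [← hu]
    rw [← Module.End.mul_apply, hff, hu]
  have hfc : cmap N π 1 = f := rfl
  have hf0 : f ≠ 0 := fun h0 => hne (by rw [h0, op_zero])
  have hm : ∃ m : M, f m ≠ 0 := by
    by_contra h
    push_neg at h
    exact hf0 (LinearMap.ext fun m => by rw [h m]; rfl)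
  obtain ⟨m, hm⟩ := hm
  have hn0 : π m ≠ 0 := fun h0 => hm (by
    have : ((π m : N) : M) = f m := rfl
    rw [h0] at this; simpa using this.symm)
  haveI : Nontrivial (Module.End A N) :=
    ⟨1, 0, fun H => hn0 (by simpa using LinearMap.congr_fun H (π m))⟩
  refine IsLocalRing.of_is_unit_or_is_unit_of_add_one ?_
  intro a b hab
  have hb : b = 1 - a := by rw [← hab]; abel
  subst hb
  set x : (Module.End A M)ᵐᵒᵖ := op (cmap N π a) with hx
  have hsand : ∀ g : Module.End A N, op f * op (cmap N π g) * op f = op (cmap N π g) := by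
    intro g
    rw [op_corner, ← hfc, cmap_mul hπ, cmap_mul hπ, one_mul, mul_one]
  have hxe : op f * x * op f = op (cmap N π a) := hsand a
  rcases hcor x with ⟨y, h1, h2⟩ | ⟨y, h1, h2⟩
  · left
    set Y : Module.End A M := y.unop with hY
    have hye : op f * y * op f = op (cmap N π (π ∘ₗ Y ∘ₗ N.subtype)) := by
      rw [show y = op Y from (op_unop y).symm, op_corner, cmap_r, hfc]
    rw [hxe, hye, ← op_mul, cmap_mul hπ, ← hfc] at h1 h2
    exact isUnit_iff_exists.mpr ⟨π ∘ₗ Y ∘ₗ N.subtype,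
      cmap_inj hπ (op_injective h2), cmap_inj hπ (op_injective h1)⟩
  · right
    set Y : Module.End A M := y.unop with hY
    have hye : op f * y * op f = op (cmap N π (π ∘ₗ Y ∘ₗ N.subtype)) := by
      rw [show y = op Y from (op_unop y).symm, op_corner, cmap_r, hfc]
    have hsub : op f - op f * x * op f = op (cmap N π (1 - a)) := by
      rw [hxe, cmap_sub, op_sub, hfc]
    rw [hsub, hye, ← op_mul, cmap_mul hπ, ← hfc] at h1 h2
    exact isUnit_iff_exists.mpr ⟨π ∘ₗ Y ∘ₗ N.subtype,
      cmap_inj hπ (op_injective h2), cmap_inj hπ (op_injective h1)⟩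

end Aux3

theorem endRing_topSemiperfect_iff_direct_sum_of_local
    (A : Type u) (M : Type u) [Ring A] [AddCommGroup M] [Module A M] :
    letI : TopologicalSpace (Module.End A M)ᵐᵒᵖ := finiteTopologyEnd A M
    (IsTopSemiperfect (Module.End A M)ᵐᵒᵖ ↔
      ∃ (ι : Type u) (N : ι → Submodule A M),
        iSupIndep N ∧ iSup N = ⊤ ∧ ∀ i, IsLocalRing (Module.End A (N i))) := by
  letI : TopologicalSpace (Module.End A M)ᵐᵒᵖ := finiteTopologyEnd A M
  show IsTopSemiperfect (Module.End A M)ᵐᵒᵖ ↔ _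
  constructor
  · rintro ⟨Z, e, _htend, hloc, horth, hsum⟩
    set f : Z → Module.End A M := fun z => (e z).unop with hfdef
    have hmul0 : ∀ z w, z ≠ w → ∀ m, f w (f z m) = 0 := by
      intro z w hzw m
      have h1 : f w * f z = 0 := by
        have := congrArg unop (horth z w hzw)
        rwa [unop_mul, unop_zero] at this
      rw [← Module.End.mul_apply, h1, LinearMap.zero_apply]
    have hidem : ∀ z, ∀ m, f z (f z m) = f z m := by
      intro z m
      have h1 : f z * f z = f z := by
        have := congrArg unop ((hloc z).1 : e z * e z = e z)
        rwa [unop_mul] at this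
      rw [← Module.End.mul_apply, h1]
    refine ⟨Z, fun z => LinearMap.range (f z), ?_, ?_, ?_⟩
    · rw [iSupIndep_def]
      intro z
      rw [Submodule.disjoint_def]
      intro m hm1 hm2
      have hker : (⨆ (w) (_ : w ≠ z), LinearMap.range (f w)) ≤ LinearMap.ker (f z) := by
        refine iSup_le fun w => iSup_le fun hwz => ?_
        rintro _ ⟨u, rfl⟩
        exact LinearMap.mem_ker.mpr (hmul0 w z hwz u)
      have h0 : f z m = 0 := LinearMap.mem_ker.mp (hker hm2)
      obtain ⟨u, hu⟩ := hm1
      have hm' : f z m = m := by rw [← hu]; exact hidem z u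
      rw [← hm', h0]
    · have hS : ∀ m : M, ∀ᶠ s in atTop, (∑ z ∈ s, e z).unop m = (1 : (Module.End A M)ᵐᵒᵖ).unop m :=
        tendsto_fte_iff.mp hsum
      rw [Submodule.eq_top_iff']
      intro m
      obtain ⟨s, hs⟩ := (hS m).exists
      rw [Finset.unop_sum, LinearMap.sum_apply, unop_one, Module.End.one_apply] at hs
      rw [← hs]
      exact Submodule.sum_mem _ fun z _ =>
        Submodule.mem_iSup_of_mem z (LinearMap.mem_range_self (f z) m)
    · intro z
      exact isLocalRing_of_isLocalIdempotent (f z) (by rw [hfdef]; rw [op_unop]; exact hloc z)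
  · rintro ⟨ι, N, hindep, hsup, hloc⟩
    classical
    have hint : DirectSum.IsInternal N :=
      (DirectSum.isInternal_submodule_iff_iSupIndep_and_iSup_eq_top N).mpr ⟨hindep, hsup⟩
    set φ : DirectSum ι (fun i => N i) ≃ₗ[A] M := LinearEquiv.ofBijective (DirectSum.coeLinearMap N) hint
      with hφdef
    set π : ∀ i, M →ₗ[A] N i :=
      fun i => (DirectSum.component A ι (fun i => N i) i).comp φ.symm.toLinearMap with hπdef
    have hπapp : ∀ i (m : M), π i m = (φ.symm m) i := fun i m => rfl
    have hπ : ∀ i, ∀ n : N i, π i (n : M) = n := by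
      intro i n
      rw [hπapp]
      exact hint.ofBijective_coeLinearMap_same n
    have hπne : ∀ i j, i ≠ j → ∀ n : N i, π j (n : M) = 0 := by
      intro i j hij n
      rw [hπapp]
      exact hint.ofBijective_coeLinearMap_of_ne hij n
    refine ⟨ι, fun i => op (cmap (N i) (π i) 1), ?_, ?_, ?_, ?_⟩
    · rw [tendsto_fte_iff]
      intro m
      rw [eventually_cofinite]
      refine Set.Finite.subset (φ.symm m).support.finite_toSet fun i hi => ?_
      simp only [Set.mem_setOf_eq, unop_op, unop_zero, LinearMap.zero_apply] at hi
      rw [cmap_apply, Module.End.one_apply, hπapp] at hi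
      rw [Finset.mem_coe, DFinsupp.mem_support_iff]
      intro h0
      exact hi (by rw [h0]; simp)
    · exact fun i => isLocalIdempotent_of_local (hπ i) (hloc i)
    · intro i j hij
      rw [← op_mul, ← op_zero]
      congr 1
      apply LinearMap.ext; intro m
      rw [Module.End.mul_apply, cmap_apply, cmap_apply, Module.End.one_apply, Module.End.one_apply,
        LinearMap.zero_apply, hπne i j hij]
      simp
    · show Filter.Tendsto _ atTop _
      rw [tendsto_fte_iff]
      intro m
      rw [eventually_atTop]
      refine ⟨(φ.symm m).support, fun s hs => ?_⟩
      rw [Finset.unop_sum, LinearMap.sum_apply, unop_one, Module.End.one_apply]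
      have hterm : ∀ i, (op (cmap (N i) (π i) 1)).unop m = ((φ.symm m) i : M) := by
        intro i
        rw [unop_op, cmap_apply, Module.End.one_apply, hπapp]
      calc ∑ i ∈ s, (op (cmap (N i) (π i) 1)).unop m
          = ∑ i ∈ s, ((φ.symm m) i : M) := Finset.sum_congr rfl fun i _ => hterm i
        _ = ∑ i ∈ (φ.symm m).support, ((φ.symm m) i : M) := by
            refine (Finset.sum_subset hs fun i _ hi => ?_).symm
            rw [DFinsupp.notMem_support_iff.mp hi, Submodule.coe_zero]
        _ = DirectSum.coeLinearMap N (φ.symm m) := by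
            rw [DirectSum.coeLinearMap_eq_dfinsuppSum]
            rfl
        _ = m := φ.apply_symm_apply m
end

section
/- Let A be an associative unital ring and M = ⊕_{z∈Z} M_z a left A-module decomposed as a (possibly infinite) direct sum of A-modules M_z each having a local endomorphism ring. Let 𝔯 = End_A(M)^op be endowed with the finite topology. Then an element h ∈ 𝔯 belongs to the topological Jacobson radical 𝔥(𝔯) if and only if, for every pair of indices w, z ∈ Z, the component of h from M_w to M_z (i.e., the composition of the direct-sum inclusion M_w → M, the endomorphism h, and the direct-sum projection M → M_z) is not an isomorphism of A-modules. -/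
open Filter MulOpposite

universe u

set_option linter.unusedSectionVars false
set_option maxHeartbeats 1000000
open DirectSum
section Aux
variable {A : Type u} {Z : Type u} [DecidableEq Z] {N : Z → Type u}
  [Ring A] [∀ z, AddCommGroup (N z)] [∀ z, Module A (N z)]

lemma exists_ne_zero_of_local {w : Z} (hw : IsLocalRing (Module.End A (N w))) :
    ∃ x : N w, x ≠ 0 := by
  by_contra hc
  push_neg at hc
  have : Subsingleton (N w) := ⟨fun a b => by rw [hc a, hc b]⟩
  have : (1 : Module.End A (N w)) = 0 := by ext x; simp [hc]
  exact one_ne_zero this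

lemma exists_left_inv {U V W : Type u} [AddCommGroup U] [AddCommGroup V] [AddCommGroup W]
    [Module A U] [Module A V] [Module A W]
    (t : U →ₗ[A] V) (c : V →ₗ[A] W) (h : Function.Bijective (c ∘ₗ t)) :
    ∃ s : V →ₗ[A] U, s ∘ₗ t = LinearMap.id := by
  let E := LinearEquiv.ofBijective (c ∘ₗ t) h
  refine ⟨E.symm.toLinearMap ∘ₗ c, ?_⟩
  ext x
  have : E.symm (E x) = x := E.symm_apply_apply x
  simpa [E, LinearEquiv.ofBijective_apply] using this

lemma bij_of_comp_eq_id {w z : Z} (hw : IsLocalRing (Module.End A (N w)))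
    (hz : IsLocalRing (Module.End A (N z)))
    (b : N w →ₗ[A] N z) (c : N z →ₗ[A] N w) (h : c ∘ₗ b = LinearMap.id) :
    Function.Bijective b := by
  set e : Module.End A (N z) := b ∘ₗ c with he
  have hee : e * e = e := by
    show (b ∘ₗ c) ∘ₗ (b ∘ₗ c) = b ∘ₗ c
    rw [LinearMap.comp_assoc, ← LinearMap.comp_assoc c b c, h]
    simp
  have : IsUnit e ∨ IsUnit (1 - e) := by
    haveI := hz
    exact IsLocalRing.isUnit_or_isUnit_of_add_one (by abel)
  rcases this with hu | hu
  · -- idempotent unit ⇒ e = 1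
    have h1 : e = 1 := by
      rcases hu with ⟨u, hu⟩
      have h2 : (↑u⁻¹ : Module.End A (N z)) * (e * e) = ↑u⁻¹ * e := by rw [hee]
      rw [← hu, ← mul_assoc, u.inv_mul, one_mul] at h2
      rw [← hu, h2]
    have hbc : b ∘ₗ c = LinearMap.id := by
      have := h1
      simpa [he, Module.End.mul_eq_comp, Module.End.one_eq_id] using this
    constructor
    · intro x y hxy
      have := congrArg c hxy
      have hx := LinearMap.congr_fun h x
      have hy := LinearMap.congr_fun h y
      simp only [LinearMap.comp_apply, LinearMap.id_apply] at hx hy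
      rwa [hx, hy] at this
    · intro y
      refine ⟨c y, ?_⟩
      have := LinearMap.congr_fun hbc y
      simpa using this
  · -- 1 - e unit with e(1-e)=0 ⇒ e = 0 ⇒ contradiction with c b = 1, N w ≠ 0
    exfalso
    have h0 : e = 0 := by
      rcases hu with ⟨u, hu⟩
      have hmul : e * (1 - e) = 0 := by
        rw [mul_sub, mul_one, hee, sub_self]
      have : e * ((1 - e) * ↑u⁻¹) = 0 := by rw [← mul_assoc, hmul, zero_mul]
      rwa [← hu, u.mul_inv, mul_one] at this
    have hb0 : b = 0 := by
      have : b ∘ₗ (c ∘ₗ b) = (b ∘ₗ c) ∘ₗ b := by rw [LinearMap.comp_assoc]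
      rw [h] at this
      have he0 : b ∘ₗ c = 0 := h0
      rw [he0] at this
      simpa using this
    have : c ∘ₗ (0 : N w →ₗ[A] N z) = LinearMap.id := hb0 ▸ h
    have h10 : (LinearMap.id : N w →ₗ[A] N w) = 0 := by
      rw [← this]; ext x; simp
    obtain ⟨x, hx⟩ := exists_ne_zero_of_local (A := A) hw
    exact hx (by simpa using congrArg (fun f => f x) h10)

lemma not_bij_zero {w z : Z} (hw : IsLocalRing (Module.End A (N w))) :
    ¬ Function.Bijective (0 : N w →ₗ[A] N z) := by
  intro hb
  obtain ⟨x, hx⟩ := exists_ne_zero_of_local (A := A) hw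
  have : (0 : N w →ₗ[A] N z) x = (0 : N w →ₗ[A] N z) 0 := by simp
  exact hx (hb.1 this)

lemma nonbij_add {w z : Z} (hw : IsLocalRing (Module.End A (N w)))
    {f g : N w →ₗ[A] N z} (hf : ¬ Function.Bijective f) (hg : ¬ Function.Bijective g) :
    ¬ Function.Bijective (f + g) := by
  intro hfg
  let E := LinearEquiv.ofBijective (f + g) hfg
  set u : Module.End A (N w) := E.symm.toLinearMap ∘ₗ f with hu
  set v : Module.End A (N w) := E.symm.toLinearMap ∘ₗ g with hv
  have huv : u + v = 1 := by
    ext x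
    have : E.symm ((f + g) x) = x := E.symm_apply_apply x
    simpa [u, v, E, map_add] using this
  haveI := hw
  rcases IsLocalRing.isUnit_or_isUnit_of_add_one huv with hun | hun
  · apply hf
    have hfe : f = E.toLinearMap ∘ₗ u := by
      ext x; simp [u, E, LinearEquiv.ofBijective_apply]
    rw [hfe]
    have := Function.Bijective.comp E.bijective ((Module.End.isUnit_iff u).mp hun)
    simpa [LinearMap.coe_comp] using this
  · apply hg
    have hge : g = E.toLinearMap ∘ₗ v := by
      ext x; simp [v, E, LinearEquiv.ofBijective_apply]
    rw [hge]
    have := Function.Bijective.comp E.bijective ((Module.End.isUnit_iff v).mp hun)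
    simpa [LinearMap.coe_comp] using this

/-- If a composite through a non-bijective first leg is bijective, contradiction. -/
lemma nonbij_comp {w y z : Z} (hw : IsLocalRing (Module.End A (N w)))
    (hy : IsLocalRing (Module.End A (N y)))
    (f : N w →ₗ[A] N y) (g : N y →ₗ[A] N z)
    (hf : ¬ Function.Bijective f) (hb : Function.Bijective (g ∘ₗ f)) : False := by
  obtain ⟨s, hs⟩ := exists_left_inv f g hb
  exact hf (bij_of_comp_eq_id hw hy f s hs)

end Aux


lemma nonunit_add_of_local {R : Type*} [Ring R] [IsLocalRing R] {a b : R}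
    (ha : ¬ IsUnit a) (hb : ¬ IsUnit b) : ¬ IsUnit (a + b) := by
  intro h
  obtain ⟨u, hu⟩ := h
  have h1 : (↑u⁻¹ * a) + (↑u⁻¹ * b) = 1 := by rw [← mul_add, ← hu, u.inv_mul]
  rcases IsLocalRing.isUnit_or_isUnit_of_add_one h1 with h' | h'
  · apply ha
    have : a = ↑u * (↑u⁻¹ * a) := by rw [← mul_assoc, u.mul_inv, one_mul]
    rw [this]; exact u.isUnit.mul h'
  · apply hb
    have : b = ↑u * (↑u⁻¹ * b) := by rw [← mul_assoc, u.mul_inv, one_mul]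
    rw [this]; exact u.isUnit.mul h'

lemma nonunit_sum_of_local {R : Type*} [Ring R] [IsLocalRing R] {ι : Type*}
    (F : Finset ι) (f : ι → R) (h : ∀ i ∈ F, ¬ IsUnit (f i)) :
    ¬ IsUnit (∑ i ∈ F, f i) := by
  classical
  induction F using Finset.induction_on with
  | empty => simp
  | @insert a s ha IH =>
    rw [Finset.sum_insert ha]
    exact nonunit_add_of_local (h a (Finset.mem_insert_self a s))
      (IH fun i hi => h i (Finset.mem_insert_of_mem hi))

lemma isUnit_middle {R : Type*} [Ring R] {x y z : R} (hx : IsUnit x) (hz : IsUnit z)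
    (h : IsUnit (x * y * z)) : IsUnit y := by
  obtain ⟨u, hu⟩ := hx; obtain ⟨v, hv⟩ := hz
  have hy : y = ↑u⁻¹ * (x * y * z) * ↑v⁻¹ := by
    rw [← hu, ← hv]
    calc (y : R) = (↑u⁻¹ * ↑u) * y * (↑v * ↑v⁻¹) := by rw [u.inv_mul, v.mul_inv, one_mul, mul_one]
    _ = ↑u⁻¹ * (↑u * y * ↑v) * ↑v⁻¹ := by noncomm_ring
  rw [hy]
  exact (u⁻¹.isUnit.mul h).mul v⁻¹.isUnit


section
variable {A : Type u} {Z : Type u} [DecidableEq Z] {N : Z → Type u}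
  [Ring A] [∀ z, AddCommGroup (N z)] [∀ z, Module A (N z)]

variable (A N) in
noncomputable def proj (F : Finset Z) : Module.End A (⨁ z, N z) :=
  ∑ y ∈ F, (lof A Z N y) ∘ₗ (component A Z N y)

-- pointwise lemmas (proved in chunk2, restated here as axioms-to-merge; for now assume)
lemma proj_lof_of_mem {F : Finset Z} {w : Z} (hw : w ∈ F) (x : N w) :
    proj A N F ((lof A Z N w) x) = lof A Z N w x := by
  rw [proj, LinearMap.sum_apply]
  rw [Finset.sum_eq_single_of_mem w hw]
  · simp [DirectSum.component.of]
  · intro y _ hy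
    simp [DirectSum.component.of, hy.symm]

lemma proj_lof_of_notMem {F : Finset Z} {w : Z} (hw : w ∉ F) (x : N w) :
    proj A N F ((lof A Z N w) x) = 0 := by
  rw [proj, LinearMap.sum_apply]
  apply Finset.sum_eq_zero
  intro y hy
  have : w ≠ y := fun e => hw (e ▸ hy)
  simp [DirectSum.component.of, this]

lemma component_proj_of_mem {F : Finset Z} {z : Z} (hz : z ∈ F) (v : ⨁ z, N z) :
    component A Z N z (proj A N F v) = component A Z N z v := by
  rw [proj, LinearMap.sum_apply, map_sum]
  rw [Finset.sum_eq_single_of_mem z hz]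
  · simp [DirectSum.component.of]
  · intro y _ hy
    simp [DirectSum.component.of, hy]

lemma component_proj_of_notMem {F : Finset Z} {z : Z} (hz : z ∉ F) (v : ⨁ z, N z) :
    component A Z N z (proj A N F v) = 0 := by
  rw [proj, LinearMap.sum_apply, map_sum]
  apply Finset.sum_eq_zero
  intro y hy
  have : y ≠ z := fun e => hz (e ▸ hy)
  simp [DirectSum.component.of, this]

-- End-level lemmas
lemma comp_comp_proj_of_mem {F : Finset Z} {z : Z} (hz : z ∈ F) :
    (component A Z N z) ∘ₗ proj A N F = component A Z N z :=
  LinearMap.ext fun v => component_proj_of_mem hz v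

lemma comp_comp_proj_of_notMem {F : Finset Z} {z : Z} (hz : z ∉ F) :
    (component A Z N z) ∘ₗ proj A N F = 0 :=
  LinearMap.ext fun v => component_proj_of_notMem hz v

lemma proj_comp_lof_of_mem {F : Finset Z} {w : Z} (hw : w ∈ F) :
    proj A N F ∘ₗ (lof A Z N w) = lof A Z N w :=
  LinearMap.ext fun x => proj_lof_of_mem hw x

lemma proj_comp_lof_of_notMem {F : Finset Z} {w : Z} (hw : w ∉ F) :
    proj A N F ∘ₗ (lof A Z N w) = 0 :=
  LinearMap.ext fun x => proj_lof_of_notMem hw x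

lemma proj_mul_proj (F : Finset Z) :
    proj A N F * proj A N F = proj A N F := by
  ext w x : 2
  by_cases hw : w ∈ F
  · show proj A N F (proj A N F ((lof A Z N w) x)) = proj A N F ((lof A Z N w) x)
    rw [proj_lof_of_mem hw, proj_lof_of_mem hw]
  · show proj A N F (proj A N F ((lof A Z N w) x)) = proj A N F ((lof A Z N w) x)
    rw [proj_lof_of_notMem hw, map_zero]

lemma proj_insert {F : Finset Z} {z₀ : Z} (hz₀ : z₀ ∉ F) :
    proj A N (insert z₀ F) = (lof A Z N z₀) ∘ₗ (component A Z N z₀) + proj A N F := by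
  rw [proj, Finset.sum_insert hz₀]; rfl

end

section
variable {A : Type u} {Z : Type u} [DecidableEq Z] {N : Z → Type u}
  [Ring A] [∀ z, AddCommGroup (N z)] [∀ z, Module A (N z)]

lemma proj_apply_eq_self {F : Finset Z} {v : ⨁ z, N z} (h : ∀ y ∉ F, v y = 0) :
    proj A N F v = v := by
  classical
  have hv := DirectSum.sum_support_of v
  have hsub : DFinsupp.support v ⊆ F := by
    intro y hy
    by_contra hyF
    exact (DFinsupp.mem_support_iff.mp hy) (h y hyF)
  calc proj A N F v = ∑ y ∈ F, (lof A Z N y) (component A Z N y v) := by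
        rw [proj, LinearMap.sum_apply]; rfl
    _ = ∑ y ∈ F, (of N y) (v y) := by
        refine Finset.sum_congr rfl fun y _ => ?_
        rw [lof_eq_of, ← DirectSum.apply_eq_component]
    _ = ∑ y ∈ DFinsupp.support v, (of N y) (v y) := by
        refine (Finset.sum_subset hsub fun y _ hy => ?_).symm
        have : v y = 0 := by
          by_contra hne
          exact hy (DFinsupp.mem_support_iff.mpr hne)
        rw [this, map_zero]
    _ = v := hv

/-- If `t : N w → ⨁ N` is a split monomorphism, then some component of `t` is bijective. -/
lemma splitmono_contra (hloc : ∀ z, IsLocalRing (Module.End A (N z))) {w : Z}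
    (t : N w →ₗ[A] ⨁ z, N z) (s : (⨁ z, N z) →ₗ[A] N w)
    (hst : s ∘ₗ t = LinearMap.id)
    (hcomp : ∀ y, ¬ Function.Bijective ⇑((component A Z N y) ∘ₗ t)) : False := by
  classical
  obtain ⟨x₀, hx₀⟩ := exists_ne_zero_of_local (A := A) (hloc w)
  set G : Finset Z := DFinsupp.support (t x₀) with hG
  set a : Module.End A (N w) := s ∘ₗ (proj A N G) ∘ₗ t with ha
  have hab : a + (1 - a) = 1 := by abel
  haveI := hloc w
  rcases IsLocalRing.isUnit_or_isUnit_of_add_one hab with hu | hu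
  · -- a is a unit: finite sum of nonunits, contradiction
    have hdecomp : a = ∑ y ∈ G, ((s ∘ₗ (lof A Z N y)) ∘ₗ ((component A Z N y) ∘ₗ t)) := by
      ext x
      simp only [ha, LinearMap.comp_apply, proj, LinearMap.sum_apply, map_sum]
    have hnon : ∀ y ∈ G, ¬ IsUnit ((s ∘ₗ (lof A Z N y)) ∘ₗ ((component A Z N y) ∘ₗ t)) := by
      intro y _ hun
      obtain ⟨u, hu'⟩ := hun
      have hinv : ((↑u⁻¹ : Module.End A (N w)) ∘ₗ (s ∘ₗ (lof A Z N y))) ∘ₗ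
          ((component A Z N y) ∘ₗ t) = LinearMap.id := by
        have := u.inv_mul
        rw [hu'] at this
        calc ((↑u⁻¹ : Module.End A (N w)) ∘ₗ (s ∘ₗ (lof A Z N y))) ∘ₗ
            ((component A Z N y) ∘ₗ t)
            = ↑u⁻¹ * ((s ∘ₗ (lof A Z N y)) ∘ₗ ((component A Z N y) ∘ₗ t)) := by
              rw [Module.End.mul_eq_comp, LinearMap.comp_assoc]
          _ = LinearMap.id := by rw [this]; rfl
      exact hcomp y (bij_of_comp_eq_id (hloc w) (hloc y) _ _ hinv)
    rw [hdecomp] at hu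
    exact nonunit_sum_of_local G _ hnon hu
  · -- 1 - a is a unit but kills x₀
    have hker : (1 - a) x₀ = 0 := by
      have hsupp : proj A N G (t x₀) = t x₀ :=
        proj_apply_eq_self fun y hy => by
          by_contra hne
          exact hy (DFinsupp.mem_support_iff.mpr hne)
      have hstx : s (t x₀) = x₀ := by
        have := LinearMap.congr_fun hst x₀; simpa using this
      simp [LinearMap.sub_apply, ha, LinearMap.comp_apply, hsupp, hstx]
    obtain ⟨u, hu'⟩ := hu
    have : x₀ = 0 := by
      have h1 : (↑u⁻¹ * (1 - a)) x₀ = x₀ := by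
        rw [← hu', u.inv_mul]; rfl
      rw [Module.End.mul_apply, hker, map_zero] at h1
      exact h1.symm
    exact hx₀ this
end
section
variable {A : Type u} {Z : Type u} [DecidableEq Z] {N : Z → Type u}
  [Ring A] [∀ z, AddCommGroup (N z)] [∀ z, Module A (N z)]

/-- A "corner" endomorphism of a direct sum, supported on a finite set of coordinates,
all of whose components are non-bijective, has `1 - k` invertible. -/
lemma corner_unit (hloc : ∀ z, IsLocalRing (Module.End A (N z))) (F : Finset Z) :
    ∀ k : Module.End A (⨁ z, N z),
      proj A N F * k * proj A N F = k →
      (∀ w z : Z, ¬ Function.Bijective ⇑((component A Z N z) ∘ₗ k ∘ₗ (lof A Z N w))) →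
      IsUnit (1 - k) := by
  classical
  induction F using Finset.induction_on with
  | empty =>
    intro k hk _
    have : k = 0 := by
      rw [← hk]
      have : proj A N (∅ : Finset Z) = 0 := by simp [proj]
      rw [this, zero_mul, mul_zero]
    rw [this, sub_zero]
    exact isUnit_one
  | @insert z₀ F' hz₀ IH =>
    intro k hk hcomp
    haveI := hloc z₀
    -- the corner endomorphism a at z₀ and the inverse α of 1 - a
    set a : Module.End A (N z₀) :=
      (component A Z N z₀) ∘ₗ k ∘ₗ (lof A Z N z₀) with ha
    have hanu : ¬ IsUnit a := by
      rw [Module.End.isUnit_iff]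
      exact hcomp z₀ z₀
    have h1a : IsUnit (1 - a) := by
      rcases IsLocalRing.isUnit_or_isUnit_of_add_one
        (show a + (1 - a) = 1 by abel) with h | h
      · exact absurd h hanu
      · exact h
    obtain ⟨υ, hυ⟩ := h1a
    set α : Module.End A (N z₀) := ↑υ⁻¹ with hα
    have hα1 : α * (1 - a) = 1 := by rw [hα, ← hυ]; exact υ.inv_mul
    have hα2 : (1 - a) * α = 1 := by rw [hα, ← hυ]; exact υ.mul_inv
    have haα : a * α = α - 1 := by
      have h := hα2
      rw [sub_mul, one_mul] at h
      rw [← h]; abel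
    have hαa : α * a = α - 1 := by
      have h := hα1
      rw [mul_sub, mul_one] at h
      rw [← h]; abel
    -- pointwise fact from haα, hαa
    have haα_pt : ∀ y : N z₀,
        (component A Z N z₀) (k ((lof A Z N z₀) (α y))) = α y - y := by
      intro y
      have h := LinearMap.congr_fun haα y
      simpa [ha, Module.End.mul_apply, LinearMap.comp_apply] using h
    have hαa_pt : ∀ y : N z₀,
        α ((component A Z N z₀) (k ((lof A Z N z₀) y))) = α y - y := by
      intro y
      have h := LinearMap.congr_fun hαa y
      simpa [ha, Module.End.mul_apply, LinearMap.comp_apply] using h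
    -- basic projections
    set P : Module.End A (⨁ z, N z) := (lof A Z N z₀) ∘ₗ (component A Z N z₀) with hP
    set Ahat : Module.End A (⨁ z, N z) := (lof A Z N z₀) ∘ₗ (α ∘ₗ (component A Z N z₀)) with hA
    set e' : Module.End A (⨁ z, N z) := proj A N F' with he'
    -- decomposition of k
    have hins : proj A N (insert z₀ F') = P + e' := proj_insert hz₀
    have hsplit0 : (P + e') * k * (P + e') = k := by rw [← hins]; exact hk
    set ah : Module.End A (⨁ z, N z) := P * k * P with hah
    set bh : Module.End A (⨁ z, N z) := P * k * e' with hbh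
    set ch : Module.End A (⨁ z, N z) := e' * k * P with hch
    set dh : Module.End A (⨁ z, N z) := e' * k * e' with hdh
    have hsplit : k = ah + bh + ch + dh := by
      rw [hah, hbh, hch, hdh]
      conv_lhs => rw [← hsplit0]
      noncomm_ring
    -- pair facts
    have fPP : P * P = P := by
      refine LinearMap.ext fun v => ?_
      simp [hP, Module.End.mul_apply, DirectSum.component.lof_self]
    have fPe : P * e' = 0 := by
      refine LinearMap.ext fun v => ?_
      simp [hP, he', Module.End.mul_apply, component_proj_of_notMem hz₀]
    have feP : e' * P = 0 := by
      refine LinearMap.ext fun v => ?_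
      simp [hP, he', Module.End.mul_apply, proj_lof_of_notMem hz₀]
    have fee : e' * e' = e' := proj_mul_proj F'
    have fAe : Ahat * e' = 0 := by
      refine LinearMap.ext fun v => ?_
      simp [hA, he', Module.End.mul_apply, component_proj_of_notMem hz₀]
    have feA : e' * Ahat = 0 := by
      refine LinearMap.ext fun v => ?_
      simp [hA, he', Module.End.mul_apply, proj_lof_of_notMem hz₀]
    have fPA : P * Ahat = Ahat := by
      refine LinearMap.ext fun v => ?_
      simp [hP, hA, Module.End.mul_apply, DirectSum.component.lof_self]
    have fAP : Ahat * P = Ahat := by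
      refine LinearMap.ext fun v => ?_
      simp [hP, hA, Module.End.mul_apply, DirectSum.component.lof_self]
    have faA : ah * Ahat = Ahat - P := by
      refine LinearMap.ext fun v => ?_
      simp [hah, hP, hA, Module.End.mul_apply, LinearMap.sub_apply,
        DirectSum.component.lof_self, haα_pt, map_sub]
    have fAa : Ahat * ah = Ahat - P := by
      refine LinearMap.ext fun v => ?_
      simp [hah, hP, hA, Module.End.mul_apply, LinearMap.sub_apply,
        DirectSum.component.lof_self, hαa_pt, map_sub]
    have faP : ah * P = ah := by rw [hah, mul_assoc, fPP]
    have fPa : P * ah = ah := by rw [hah, ← mul_assoc, ← mul_assoc, fPP]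
    have fbA : bh * Ahat = 0 := by rw [hbh, mul_assoc, feA, mul_zero]
    have fdA : dh * Ahat = 0 := by rw [hdh, mul_assoc, feA, mul_zero]
    have fAc : Ahat * ch = 0 := by
      rw [hch, ← mul_assoc, ← mul_assoc, fAe, zero_mul, zero_mul]
    have fAd : Ahat * dh = 0 := by
      rw [hdh, ← mul_assoc, ← mul_assoc, fAe, zero_mul, zero_mul]
    have fcP : ch * P = ch := by rw [hch, mul_assoc, fPP]
    have fPb : P * bh = bh := by rw [hbh, ← mul_assoc, ← mul_assoc, fPP]
    have fad : ah * dh = 0 := by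
      rw [hah, hdh, mul_assoc (P * k) P, ← mul_assoc P (e' * k) e',
        ← mul_assoc P e' k, fPe, zero_mul, zero_mul, mul_zero]
    have fac : ah * ch = 0 := by
      rw [hah, hch, mul_assoc (P * k) P, ← mul_assoc P (e' * k) P,
        ← mul_assoc P e' k, fPe, zero_mul, zero_mul, mul_zero]
    have fec : e' * ch = ch := by rw [hch, ← mul_assoc, ← mul_assoc, fee]
    have fbe : bh * e' = bh := by rw [hbh, mul_assoc, fee]
    have fed : e' * dh = dh := by rw [hdh, ← mul_assoc, ← mul_assoc, fee]
    have fde : dh * e' = dh := by rw [hdh, mul_assoc, fee]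
    -- applied ("head") versions for simp
    have raA : ∀ x : Module.End A (⨁ z, N z), ah * (Ahat * x) = Ahat * x - P * x := by
      intro x; rw [← mul_assoc, faA, sub_mul]
    have rAa : ∀ x : Module.End A (⨁ z, N z), Ahat * (ah * x) = Ahat * x - P * x := by
      intro x; rw [← mul_assoc, fAa, sub_mul]
    have rbA : ∀ x : Module.End A (⨁ z, N z), bh * (Ahat * x) = 0 := by
      intro x; rw [← mul_assoc, fbA, zero_mul]
    have rdA : ∀ x : Module.End A (⨁ z, N z), dh * (Ahat * x) = 0 := by
      intro x; rw [← mul_assoc, fdA, zero_mul]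
    have rAc : ∀ x : Module.End A (⨁ z, N z), Ahat * (ch * x) = 0 := by
      intro x; rw [← mul_assoc, fAc, zero_mul]
    have rAd : ∀ x : Module.End A (⨁ z, N z), Ahat * (dh * x) = 0 := by
      intro x; rw [← mul_assoc, fAd, zero_mul]
    have rcP : ∀ x : Module.End A (⨁ z, N z), ch * (P * x) = ch * x := by
      intro x; rw [← mul_assoc, fcP]
    have rPb : ∀ x : Module.End A (⨁ z, N z), P * (bh * x) = bh * x := by
      intro x; rw [← mul_assoc, fPb]
    have rad : ∀ x : Module.End A (⨁ z, N z), ah * (dh * x) = 0 := by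
      intro x; rw [← mul_assoc, fad, zero_mul]
    have rac : ∀ x : Module.End A (⨁ z, N z), ah * (ch * x) = 0 := by
      intro x; rw [← mul_assoc, fac, zero_mul]
    have raP : ∀ x : Module.End A (⨁ z, N z), ah * (P * x) = ah * x := by
      intro x; rw [← mul_assoc, faP]
    have rPa : ∀ x : Module.End A (⨁ z, N z), P * (ah * x) = ah * x := by
      intro x; rw [← mul_assoc, fPa]
    have rPP : ∀ x : Module.End A (⨁ z, N z), P * (P * x) = P * x := by
      intro x; rw [← mul_assoc, fPP]
    -- the new corner endomorphism for the induction
    set k' : Module.End A (⨁ z, N z) := dh + ch * (Ahat * bh) with hk'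
    -- the key factorization
    have hXY : (1 + ch * Ahat) * ((1 - k) * (1 + Ahat * bh)) = (1 - ah) * (1 - k') := by
      rw [hk', hsplit]
      simp only [mul_add, add_mul, mul_sub, sub_mul, mul_one, one_mul, mul_assoc,
        raA, rAa, rbA, rdA, rAc, rAd, rcP, rPb, rad, rac, raP, rPa, rPP,
        faA, fAa, fbA, fdA, fAc, fAd, fcP, fPb, fad, fac, faP, fPa, fPP,
        mul_zero, zero_mul, sub_zero, add_zero, zero_add]
      abel
    -- head versions for e'
    have red : ∀ x : Module.End A (⨁ z, N z), e' * (dh * x) = dh * x := by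
      intro x; rw [← mul_assoc, fed]
    have rec' : ∀ x : Module.End A (⨁ z, N z), e' * (ch * x) = ch * x := by
      intro x; rw [← mul_assoc, fec]
    -- induction hypotheses for k'
    have hk'proj : e' * k' * e' = k' := by
      rw [hk']
      simp only [mul_add, add_mul, mul_assoc, red, rec', fed, fec, fde, fbe]
    have hk'comp : ∀ w z : Z,
        ¬ Function.Bijective ⇑((component A Z N z) ∘ₗ k' ∘ₗ (lof A Z N w)) := by
      intro w z
      by_cases hw : w ∈ F'
      · by_cases hz : z ∈ F'
        · have heq : (component A Z N z) ∘ₗ k' ∘ₗ (lof A Z N w) =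
              ((component A Z N z) ∘ₗ k ∘ₗ (lof A Z N w)) +
              ((((component A Z N z) ∘ₗ k ∘ₗ (lof A Z N z₀)) ∘ₗ α) ∘ₗ
                ((component A Z N z₀) ∘ₗ k ∘ₗ (lof A Z N w))) := by
            refine LinearMap.ext fun x => ?_
            simp [hk', hdh, hch, hbh, hA, hP, he', Module.End.mul_apply,
              proj_lof_of_mem hw, component_proj_of_mem hz,
              DirectSum.component.lof_self]
          intro hb
          rw [heq] at hb
          refine nonbij_add (hloc w) (hcomp w z) ?_ hb
          intro hbg
          exact nonbij_comp (hloc w) (hloc z₀)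
            ((component A Z N z₀) ∘ₗ k ∘ₗ (lof A Z N w))
            (((component A Z N z) ∘ₗ k ∘ₗ (lof A Z N z₀)) ∘ₗ α)
            (hcomp w z₀) hbg
        · have hzero : (component A Z N z) ∘ₗ k' ∘ₗ (lof A Z N w) = 0 := by
            refine LinearMap.ext fun x => ?_
            simp [hk', hdh, hch, hbh, hA, hP, he', Module.End.mul_apply,
              component_proj_of_notMem hz]
          intro hb
          rw [hzero] at hb
          exact not_bij_zero (hloc w) hb
      · have hzero : (component A Z N z) ∘ₗ k' ∘ₗ (lof A Z N w) = 0 := by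
          refine LinearMap.ext fun x => ?_
          simp [hk', hdh, hch, hbh, hA, hP, he', Module.End.mul_apply,
            proj_lof_of_notMem hw]
        intro hb
        rw [hzero] at hb
        exact not_bij_zero (hloc w) hb
    have IHk' : IsUnit (1 - k') := IH k' hk'proj hk'comp
    -- invertibility of the elementary factors
    have hD1 : IsUnit (1 - ah) := by
      refine ⟨⟨1 - ah, 1 - P + Ahat, ?_, ?_⟩, rfl⟩
      · simp only [mul_sub, sub_mul, mul_add, add_mul, mul_one, one_mul,
          faP, fPa, faA, fAa, fPP, fPA, fAP]
        abel
      · simp only [mul_sub, sub_mul, mul_add, add_mul, mul_one, one_mul,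
          faP, fPa, faA, fAa, fPP, fPA, fAP]
        abel
    have hnX : (ch * Ahat) * (ch * Ahat) = 0 := by rw [mul_assoc, rAc, mul_zero]
    have hX : IsUnit (1 + ch * Ahat) := by
      refine ⟨⟨1 + ch * Ahat, 1 - ch * Ahat, ?_, ?_⟩, rfl⟩
      · simp only [mul_sub, sub_mul, mul_add, add_mul, mul_one, one_mul, hnX]
        abel
      · simp only [mul_sub, sub_mul, mul_add, add_mul, mul_one, one_mul, hnX]
        abel
    have hnY : (Ahat * bh) * (Ahat * bh) = 0 := by rw [mul_assoc, rbA, mul_zero]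
    have hY : IsUnit (1 + Ahat * bh) := by
      refine ⟨⟨1 + Ahat * bh, 1 - Ahat * bh, ?_, ?_⟩, rfl⟩
      · simp only [mul_sub, sub_mul, mul_add, add_mul, mul_one, one_mul, hnY]
        abel
      · simp only [mul_sub, sub_mul, mul_add, add_mul, mul_one, one_mul, hnY]
        abel
    have hRHS : IsUnit ((1 - ah) * (1 - k')) := hD1.mul IHk'
    rw [← hXY, ← mul_assoc] at hRHS
    exact isUnit_middle hX hY hRHS
end

section Topo
variable {A M : Type u} [Ring A] [AddCommGroup M] [Module A M]

lemma isOpen_of_ann_subset (S : Finset M)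
    (I : Submodule ((Module.End A M)ᵐᵒᵖ)ᵐᵒᵖ (Module.End A M)ᵐᵒᵖ)
    (hsub : ∀ r : (Module.End A M)ᵐᵒᵖ, (∀ m ∈ S, r.unop m = 0) → r ∈ I) :
    @IsOpen _ (finiteTopologyEnd A M) (I : Set (Module.End A M)ᵐᵒᵖ) := by
  letI : TopologicalSpace M := (⊥ : TopologicalSpace M)
  rw [finiteTopologyEnd, isOpen_induced_iff]
  refine ⟨⋃ i : I, Set.pi (↑S) (fun m => {(i : (Module.End A M)ᵐᵒᵖ).unop m}), ?_, ?_⟩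
  · apply isOpen_iUnion
    intro i
    refine isOpen_set_pi S.finite_toSet fun a _ => ?_
    haveI : @DiscreteTopology M ⊥ := { eq_bot := rfl }
    exact isOpen_discrete _
  · ext r
    simp only [Set.mem_preimage, Set.mem_iUnion, Set.mem_pi, Set.mem_singleton_iff,
      Finset.mem_coe, SetLike.mem_coe]
    constructor
    · rintro ⟨⟨i, hi⟩, hagree⟩
      have hsubmem : r - i ∈ I := by
        apply hsub
        intro m hm
        have := hagree m hm
        simp only [MulOpposite.unop_sub, LinearMap.sub_apply]
        rw [this, sub_self]
      have : (r - i) + i ∈ I := I.add_mem hsubmem hi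
      simpa using this
    · intro hr
      exact ⟨⟨r, hr⟩, fun m _ => rfl⟩

lemma ann_subset_of_isOpen
    (I : Submodule ((Module.End A M)ᵐᵒᵖ)ᵐᵒᵖ (Module.End A M)ᵐᵒᵖ)
    (hI : @IsOpen _ (finiteTopologyEnd A M) (I : Set (Module.End A M)ᵐᵒᵖ)) :
    ∃ S : Finset M, ∀ r : (Module.End A M)ᵐᵒᵖ,
      (∀ m ∈ S, r.unop m = 0) → r ∈ I := by
  letI : TopologicalSpace M := (⊥ : TopologicalSpace M)
  rw [finiteTopologyEnd, isOpen_induced_iff] at hI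
  obtain ⟨T, hT, hpre⟩ := hI
  have h0 : (fun m : M => (0 : (Module.End A M)ᵐᵒᵖ).unop m) ∈ T := by
    have : (0 : (Module.End A M)ᵐᵒᵖ) ∈ (I : Set (Module.End A M)ᵐᵒᵖ) := I.zero_mem
    rw [← hpre] at this
    exact this
  rw [isOpen_pi_iff] at hT
  obtain ⟨S, u, hu, hpi⟩ := hT _ h0
  refine ⟨S, fun r hr => ?_⟩
  have hmem : (fun m : M => r.unop m) ∈ T := by
    apply hpi
    rw [Set.mem_pi]
    intro m hm
    have he : r.unop m = (0 : (Module.End A M)ᵐᵒᵖ).unop m := by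
      rw [hr m (Finset.mem_coe.mp hm)]; simp
    show r.unop m ∈ u m
    rw [he]
    exact (hu m hm).2
  have : r ∈ (fun f : (Module.End A M)ᵐᵒᵖ => fun m : M => f.unop m) ⁻¹' T := hmem
  rw [hpre] at this
  exact this
end Topo
section Main
variable {A : Type u} {Z : Type u} [DecidableEq Z] {N : Z → Type u}
  [Ring A] [∀ z, AddCommGroup (N z)] [∀ z, Module A (N z)]
  {M : Type u} [AddCommGroup M] [Module A M]

lemma unop_opsmul {S : Type u} [Ring S] (c : (Sᵐᵒᵖ)ᵐᵒᵖ) (r : Sᵐᵒᵖ) :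
    (c • r).unop = c.unop.unop * r.unop := by
  rw [← MulOpposite.op_unop c, op_smul_eq_mul, MulOpposite.unop_mul]
  simp

/-- The right ideal of endomorphisms whose components out of `N w` are all non-bijective. -/
noncomputable def radIdeal (hloc : ∀ z, IsLocalRing (Module.End A (N z)))
    (φ : M ≃ₗ[A] DirectSum Z N) (w : Z) :
    Submodule ((Module.End A M)ᵐᵒᵖ)ᵐᵒᵖ (Module.End A M)ᵐᵒᵖ where
  carrier := {r | ∀ y : Z, ¬ Function.Bijective
    ⇑((DirectSum.component A Z N y) ∘ₗ φ.toLinearMap ∘ₗ r.unop ∘ₗ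
      φ.symm.toLinearMap ∘ₗ (DirectSum.lof A Z N w))}
  zero_mem' := by
    intro y
    have h0 : (DirectSum.component A Z N y) ∘ₗ φ.toLinearMap ∘ₗ
        (MulOpposite.unop (0 : (Module.End A M)ᵐᵒᵖ)) ∘ₗ
        φ.symm.toLinearMap ∘ₗ (DirectSum.lof A Z N w) = 0 := by
      refine LinearMap.ext fun x => ?_
      simp
    rw [h0]
    exact not_bij_zero (hloc w)
  add_mem' := by
    intro r s hr hs y
    have hadd : (DirectSum.component A Z N y) ∘ₗ φ.toLinearMap ∘ₗ
        (MulOpposite.unop (r + s)) ∘ₗ φ.symm.toLinearMap ∘ₗ (DirectSum.lof A Z N w) =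
        ((DirectSum.component A Z N y) ∘ₗ φ.toLinearMap ∘ₗ r.unop ∘ₗ
          φ.symm.toLinearMap ∘ₗ (DirectSum.lof A Z N w)) +
        ((DirectSum.component A Z N y) ∘ₗ φ.toLinearMap ∘ₗ s.unop ∘ₗ
          φ.symm.toLinearMap ∘ₗ (DirectSum.lof A Z N w)) := by
      refine LinearMap.ext fun x => ?_
      simp
    rw [hadd]
    exact nonbij_add (hloc w) (hr y) (hs y)
  smul_mem' := by
    intro c r hr y
    rw [unop_opsmul]
    have heq : (DirectSum.component A Z N y) ∘ₗ φ.toLinearMap ∘ₗ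
        (c.unop.unop * r.unop) ∘ₗ φ.symm.toLinearMap ∘ₗ (DirectSum.lof A Z N w) =
        ((DirectSum.component A Z N y) ∘ₗ (φ.toLinearMap ∘ₗ
          (c.unop.unop ∘ₗ φ.symm.toLinearMap))) ∘ₗ
        (φ.toLinearMap ∘ₗ r.unop ∘ₗ φ.symm.toLinearMap ∘ₗ (DirectSum.lof A Z N w)) := by
      refine LinearMap.ext fun x => ?_
      simp [Module.End.mul_apply]
    rw [heq]
    intro hb
    obtain ⟨s', hs'⟩ := exists_left_inv
      (φ.toLinearMap ∘ₗ r.unop ∘ₗ φ.symm.toLinearMap ∘ₗ (DirectSum.lof A Z N w))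
      ((DirectSum.component A Z N y) ∘ₗ (φ.toLinearMap ∘ₗ
        (c.unop.unop ∘ₗ φ.symm.toLinearMap))) hb
    exact splitmono_contra hloc _ s' hs' hr

lemma radIdeal_isCoatom (hloc : ∀ z, IsLocalRing (Module.End A (N z)))
    (φ : M ≃ₗ[A] DirectSum Z N) (w : Z) : IsCoatom (radIdeal hloc φ w) := by
  constructor
  · intro htop
    have h1 : (1 : (Module.End A M)ᵐᵒᵖ) ∈ radIdeal hloc φ w := by rw [htop]; trivial
    apply h1 w
    have hid : (DirectSum.component A Z N w) ∘ₗ φ.toLinearMap ∘ₗ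
        (MulOpposite.unop (1 : (Module.End A M)ᵐᵒᵖ)) ∘ₗ φ.symm.toLinearMap ∘ₗ
        (DirectSum.lof A Z N w) = LinearMap.id := by
      refine LinearMap.ext fun x => ?_
      simp [DirectSum.component.lof_self]
    rw [hid]
    simpa using Function.bijective_id
  · intro J hJ
    obtain ⟨r, hrJ, hrI⟩ := SetLike.exists_of_lt hJ
    obtain ⟨y₀, hy₀⟩ := not_forall.mp hrI
    have hy₀' : Function.Bijective
        ⇑((DirectSum.component A Z N y₀) ∘ₗ φ.toLinearMap ∘ₗ r.unop ∘ₗ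
          φ.symm.toLinearMap ∘ₗ (DirectSum.lof A Z N w)) := not_not.mp hy₀
    obtain ⟨s', hs'⟩ := exists_left_inv
      (φ.toLinearMap ∘ₗ r.unop ∘ₗ φ.symm.toLinearMap ∘ₗ (DirectSum.lof A Z N w))
      (DirectSum.component A Z N y₀) hy₀'
    have hs'_pt : ∀ v : N w,
        s' (φ (r.unop (φ.symm ((DirectSum.lof A Z N w) v)))) = v := by
      intro v
      have := LinearMap.congr_fun hs' v
      simpa using this
    rw [Submodule.eq_top_iff']
    intro x
    set g : Module.End A M := x.unop ∘ₗ φ.symm.toLinearMap ∘ₗ (DirectSum.lof A Z N w) ∘ₗ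
      s' ∘ₗ φ.toLinearMap with hg
    set c' : ((Module.End A M)ᵐᵒᵖ)ᵐᵒᵖ := MulOpposite.op (MulOpposite.op g) with hc'
    have hdiff : x - c' • r ∈ radIdeal hloc φ w := by
      intro y
      have hzero : (DirectSum.component A Z N y) ∘ₗ φ.toLinearMap ∘ₗ
          (MulOpposite.unop (x - c' • r)) ∘ₗ φ.symm.toLinearMap ∘ₗ
          (DirectSum.lof A Z N w) = 0 := by
        refine LinearMap.ext fun v => ?_
        have hu : MulOpposite.unop (x - c' • r) = x.unop - g * r.unop := by
          rw [MulOpposite.unop_sub, unop_opsmul, hc']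
          simp
        rw [hu]
        simp [Module.End.mul_apply, hg, hs'_pt]
      rw [hzero]
      exact not_bij_zero (hloc w)
    have : (x - c' • r) + c' • r ∈ J :=
      J.add_mem (le_of_lt hJ hdiff) (J.smul_mem c' hrJ)
    simpa using this

lemma radIdeal_isOpen (hloc : ∀ z, IsLocalRing (Module.End A (N z)))
    (φ : M ≃ₗ[A] DirectSum Z N) (w : Z) :
    @IsOpen _ (finiteTopologyEnd A M) ((radIdeal hloc φ w : Set (Module.End A M)ᵐᵒᵖ)) := by
  classical
  obtain ⟨x₀, hx₀⟩ := exists_ne_zero_of_local (A := A) (hloc w)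
  apply isOpen_of_ann_subset {φ.symm ((DirectSum.lof A Z N w) x₀)}
  intro r hann y hbij
  have hann' : r.unop (φ.symm ((DirectSum.lof A Z N w) x₀)) = 0 :=
    hann _ (Finset.mem_singleton_self _)
  have h1 : ((DirectSum.component A Z N y) ∘ₗ φ.toLinearMap ∘ₗ r.unop ∘ₗ
      φ.symm.toLinearMap ∘ₗ (DirectSum.lof A Z N w)) x₀ =
      ((DirectSum.component A Z N y) ∘ₗ φ.toLinearMap ∘ₗ r.unop ∘ₗ
      φ.symm.toLinearMap ∘ₗ (DirectSum.lof A Z N w)) 0 := by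
    simp [hann']
  exact hx₀ (hbij.injective h1)

end Main
theorem mem_topJacobson_iff_matrix_of_nonisos
    (A : Type u) (Z : Type u) [DecidableEq Z] (N : Z → Type u)
    [Ring A] [∀ z, AddCommGroup (N z)] [∀ z, Module A (N z)]
    (hloc : ∀ z, IsLocalRing (Module.End A (N z)))
    (M : Type u) [AddCommGroup M] [Module A M]
    (φ : M ≃ₗ[A] DirectSum Z N)
    (h : (Module.End A M)ᵐᵒᵖ) :
    letI : TopologicalSpace (Module.End A M)ᵐᵒᵖ := finiteTopologyEnd A M
    (h ∈ topJacobson (Module.End A M)ᵐᵒᵖ ↔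
      ∀ w z : Z, ¬ Function.Bijective
        (DirectSum.component A Z N z ∘ₗ φ.toLinearMap ∘ₗ MulOpposite.unop h ∘ₗ
          φ.symm.toLinearMap ∘ₗ DirectSum.lof A Z N w)) := by
  classical
  show h ∈ @topJacobson ((Module.End A M)ᵐᵒᵖ) _ (finiteTopologyEnd A M) ↔ _
  constructor
  · -- membership in the radical implies all components are non-isomorphisms
    intro hmem w z
    have hJ : h ∈ radIdeal hloc φ w := by
      have := Set.mem_iInter₂.mp hmem (radIdeal hloc φ w)
        ⟨radIdeal_isOpen hloc φ w, radIdeal_isCoatom hloc φ w⟩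
      exact this
    exact hJ z
  · -- conversely
    intro hcomp
    apply Set.mem_iInter₂.mpr
    intro I hI
    obtain ⟨hIopen, hIcoatom⟩ := hI
    by_contra hh
    -- maximality gives 1 = i + c • h
    have hlt : I < I ⊔ Submodule.span ((Module.End A M)ᵐᵒᵖ)ᵐᵒᵖ {h} := by
      refine lt_of_le_of_ne le_sup_left fun e => hh ?_
      have : h ∈ I ⊔ Submodule.span ((Module.End A M)ᵐᵒᵖ)ᵐᵒᵖ {h} :=
        Submodule.mem_sup_right (Submodule.mem_span_singleton_self h)
      rwa [← e] at this
    have htop := hIcoatom.2 _ hlt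
    have h1 : (1 : (Module.End A M)ᵐᵒᵖ) ∈
        I ⊔ Submodule.span ((Module.End A M)ᵐᵒᵖ)ᵐᵒᵖ {h} := by
      rw [htop]; trivial
    obtain ⟨i, hiI, y, hy, hiy⟩ := Submodule.mem_sup.mp h1
    obtain ⟨c, hc⟩ := Submodule.mem_span_singleton.mp hy
    -- the annihilator inside I
    obtain ⟨S, hann⟩ := ann_subset_of_isOpen I hIopen
    -- membership manipulations
    have msmul : ∀ (v : Module.End A M) (r : (Module.End A M)ᵐᵒᵖ), r ∈ I →
        MulOpposite.op (v * r.unop) ∈ I := by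
      intro v r hr
      have := I.smul_mem (MulOpposite.op (MulOpposite.op v)) hr
      have he : (MulOpposite.op (MulOpposite.op v) : ((Module.End A M)ᵐᵒᵖ)ᵐᵒᵖ) • r =
          MulOpposite.op (v * r.unop) := by
        rw [op_smul_eq_mul, ← MulOpposite.op_unop (r * MulOpposite.op v),
          MulOpposite.unop_mul]
        simp
      rwa [he] at this
    have mJ : ∀ f : Module.End A M, (∀ m ∈ S, f m = 0) → MulOpposite.op f ∈ I := by
      intro f hf
      exact hann (MulOpposite.op f) (by simpa using hf)
    -- the element 1 - g * h.unop of I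
    set g : Module.End A M := c.unop.unop with hgdef
    have hiu : i = MulOpposite.op (1 - g * h.unop) := by
      have h2 : i = 1 - c • h := by rw [← hiy, hc]; abel
      rw [h2, ← MulOpposite.op_unop (1 - c • h), MulOpposite.unop_sub, unop_opsmul,
        MulOpposite.unop_one, hgdef]
    have m1 : MulOpposite.op ((1 : Module.End A M) - g * h.unop) ∈ I := hiu ▸ hiI
    -- the corner projector
    set G : Finset Z := S.biUnion (fun m => DFinsupp.support (φ m)) with hGdef
    set ehat : Module.End A M :=
      φ.symm.toLinearMap ∘ₗ ((proj A N G) ∘ₗ φ.toLinearMap) with hehat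
    have hfix : ∀ m ∈ S, ehat m = m := by
      intro m hm
      have hsupp : ∀ y ∉ G, (φ m) y = 0 := by
        intro y hyG
        by_contra hne
        exact hyG (Finset.mem_biUnion.mpr ⟨m, hm, DFinsupp.mem_support_iff.mpr hne⟩)
      have : proj A N G (φ m) = φ m := proj_apply_eq_self hsupp
      simp [hehat, this]
    -- build op (1 - ehat * (g * h.unop) * ehat) ∈ I
    have y1 : MulOpposite.op (ehat * (1 - g * h.unop)) ∈ I := msmul ehat _ m1
    have y2 : MulOpposite.op ((ehat * (g * h.unop)) * (1 - ehat)) ∈ I := by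
      apply mJ
      intro m hm
      have : ((1 : Module.End A M) - ehat) m = 0 := by
        simp [LinearMap.sub_apply, hfix m hm]
      rw [Module.End.mul_apply, this, map_zero]
    have y3 : MulOpposite.op ((1 : Module.End A M) - ehat) ∈ I := by
      apply mJ
      intro m hm
      simp [LinearMap.sub_apply, hfix m hm]
    have m3 : MulOpposite.op ((1 : Module.End A M) - ehat * (g * h.unop) * ehat) ∈ I := by
      have hsum := I.add_mem (I.add_mem y1 y2) y3
      have heq : MulOpposite.op (ehat * (1 - g * h.unop)) +
          MulOpposite.op ((ehat * (g * h.unop)) * (1 - ehat)) +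
          MulOpposite.op ((1 : Module.End A M) - ehat) =
          MulOpposite.op ((1 : Module.End A M) - ehat * (g * h.unop) * ehat) := by
        rw [← MulOpposite.op_add, ← MulOpposite.op_add]
        congr 1
        noncomm_ring
      rwa [heq] at hsum
    -- the corner endomorphism on the direct sum
    set mid : Module.End A (⨁ z, N z) :=
      φ.toLinearMap ∘ₗ ((g * h.unop) ∘ₗ φ.symm.toLinearMap) with hmid
    set k : Module.End A (⨁ z, N z) := proj A N G * mid * proj A N G with hkdef
    have hkproj : proj A N G * k * proj A N G = k := by
      rw [hkdef]
      have : proj A N G * (proj A N G * mid * proj A N G) * proj A N G =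
          (proj A N G * proj A N G) * mid * (proj A N G * proj A N G) := by
        noncomm_ring
      rw [this, proj_mul_proj]
    have hkcomp : ∀ w z : Z, ¬ Function.Bijective
        ⇑((DirectSum.component A Z N z) ∘ₗ k ∘ₗ (DirectSum.lof A Z N w)) := by
      intro w z
      by_cases hw : w ∈ G
      · by_cases hz : z ∈ G
        · have heq : (DirectSum.component A Z N z) ∘ₗ k ∘ₗ (DirectSum.lof A Z N w) =
              ((DirectSum.component A Z N z) ∘ₗ (φ.toLinearMap ∘ₗ
                (g ∘ₗ φ.symm.toLinearMap))) ∘ₗ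
              (φ.toLinearMap ∘ₗ MulOpposite.unop h ∘ₗ φ.symm.toLinearMap ∘ₗ
                (DirectSum.lof A Z N w)) := by
            refine LinearMap.ext fun x => ?_
            simp [hkdef, hmid, Module.End.mul_apply, proj_lof_of_mem hw,
              component_proj_of_mem hz]
          rw [heq]
          intro hb
          obtain ⟨s', hs'⟩ := exists_left_inv
            (φ.toLinearMap ∘ₗ MulOpposite.unop h ∘ₗ φ.symm.toLinearMap ∘ₗ
              (DirectSum.lof A Z N w)) _ hb
          exact splitmono_contra hloc _ s' hs' (fun y => hcomp w y)
        · have hzero : (DirectSum.component A Z N z) ∘ₗ k ∘ₗ (DirectSum.lof A Z N w) = 0 := by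
            refine LinearMap.ext fun x => ?_
            simp [hkdef, Module.End.mul_apply, component_proj_of_notMem hz]
          rw [hzero]
          exact not_bij_zero (hloc w)
      · have hzero : (DirectSum.component A Z N z) ∘ₗ k ∘ₗ (DirectSum.lof A Z N w) = 0 := by
          refine LinearMap.ext fun x => ?_
          simp [hkdef, Module.End.mul_apply, proj_lof_of_notMem hw]
        rw [hzero]
        exact not_bij_zero (hloc w)
    have hunit : IsUnit (1 - k) := corner_unit hloc G k hkproj hkcomp
    obtain ⟨υ, hυ⟩ := hunit
    have hinv : (↑υ⁻¹ : Module.End A (⨁ z, N z)) * (1 - k) = 1 := by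
      rw [← hυ]; exact υ.inv_mul
    have hpt : ∀ x : ⨁ z, N z, (↑υ⁻¹ : Module.End A (⨁ z, N z)) (x - k x) = x := by
      intro x
      have := LinearMap.congr_fun hinv x
      simpa [Module.End.mul_apply, LinearMap.sub_apply] using this
    set v : Module.End A M :=
      φ.symm.toLinearMap ∘ₗ ((↑υ⁻¹ : Module.End A (⨁ z, N z)) ∘ₗ φ.toLinearMap) with hv
    have hconj : ∀ m : M, (ehat * (g * h.unop) * ehat) m = φ.symm (k (φ m)) := by
      intro m
      simp [hehat, hkdef, hmid, Module.End.mul_apply]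
    have hfinal : v * ((1 : Module.End A M) - ehat * (g * h.unop) * ehat) = 1 := by
      refine LinearMap.ext fun m => ?_
      have step1 : ((1 : Module.End A M) - ehat * (g * h.unop) * ehat) m =
          m - φ.symm (k (φ m)) := by
        rw [LinearMap.sub_apply, Module.End.one_apply, hconj]
      rw [Module.End.mul_apply, step1]
      have step2 : v (m - φ.symm (k (φ m))) =
          φ.symm ((↑υ⁻¹ : Module.End A (⨁ z, N z)) (φ m - k (φ m))) := by
        simp [hv, map_sub]
      rw [step2, hpt]
      simp
    have hone : (1 : (Module.End A M)ᵐᵒᵖ) ∈ I := by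
      have := msmul v _ m3
      rw [show MulOpposite.unop (MulOpposite.op
          ((1 : Module.End A M) - ehat * (g * h.unop) * ehat)) =
          ((1 : Module.End A M) - ehat * (g * h.unop) * ehat) from rfl] at this
      rw [hfinal] at this
      exact this
    have : I = ⊤ := by
      rw [Submodule.eq_top_iff']
      intro x
      have := msmul x.unop 1 hone
      simpa using this
    exact hIcoatom.1 this
end

section
/- Let 𝔯 be a topologically semiperfect complete, separated, right linear topological ring. Then every finitely generated discrete right 𝔯-module has a projective cover in the category of all right 𝔯-modules. -/
open Filter MulOpposite

universe u

/-- A superfluous (small) submodule. -/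
def Supf {R₀ M : Type*} [Ring R₀] [AddCommGroup M] [Module R₀ M]
    (A : Submodule R₀ M) : Prop :=
  ∀ K : Submodule R₀ M, K ⊔ A = ⊤ → K = ⊤

theorem Supf.of_le {R₀ M : Type*} [Ring R₀] [AddCommGroup M] [Module R₀ M]
    {A B : Submodule R₀ M} (hle : A ≤ B) (hB : Supf B) : Supf A := by
  intro K hK
  apply hB
  apply top_unique
  rw [← hK]
  exact sup_le_sup_left hle K

theorem Supf.bot {R₀ M : Type*} [Ring R₀] [AddCommGroup M] [Module R₀ M] :
    Supf (⊥ : Submodule R₀ M) := by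
  intro K hK
  simpa using hK

theorem Supf.sup {R₀ M : Type*} [Ring R₀] [AddCommGroup M] [Module R₀ M]
    {A B : Submodule R₀ M} (hA : Supf A) (hB : Supf B) : Supf (A ⊔ B) := by
  intro K hK
  have h1 : (K ⊔ B) ⊔ A = ⊤ := by
    rw [sup_assoc, sup_comm B A, ← hK]
  exact hB K (hA _ h1)

theorem supf_iSup {R₀ M : Type*} [Ring R₀] [AddCommGroup M] [Module R₀ M]
    {ι : Type*} [Fintype ι] (A : ι → Submodule R₀ M) (h : ∀ i, Supf (A i)) :
    Supf (⨆ i, A i) := by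
  classical
  have key : ∀ s : Finset ι, Supf (⨆ i ∈ s, A i) := by
    intro s
    induction s using Finset.induction_on with
    | empty => simpa using (Supf.bot (R₀ := R₀) (M := M))
    | insert _ _ hx ih =>
      rw [Finset.iSup_insert]
      exact Supf.sup (h _) ih
  simpa using key Finset.univ

theorem supf_map {R₀ M M₂ : Type*} [Ring R₀] [AddCommGroup M] [Module R₀ M]
    [AddCommGroup M₂] [Module R₀ M₂] (f : M →ₗ[R₀] M₂) {A : Submodule R₀ M}
    (hA : Supf A) : Supf (A.map f) := by
  intro K hK
  have h1 : Submodule.comap f K ⊔ A = ⊤ := by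
    rw [eq_top_iff]
    intro q _
    have hq : f q ∈ K ⊔ A.map f := by rw [hK]; trivial
    obtain ⟨y, hy, z, hz, hyz⟩ := Submodule.mem_sup.1 hq
    obtain ⟨a, ha, rfl⟩ := hz
    refine Submodule.mem_sup.2 ⟨q - a, ?_, a, ha, by abel⟩
    show f (q - a) ∈ K
    rw [map_sub]
    have : f q - f a = y := by rw [← hyz]; abel
    rw [this]; exact hy
  have h2 := hA _ h1
  have h3 : A.map f ≤ K := by
    rintro _ ⟨a, ha, rfl⟩
    have : a ∈ Submodule.comap f K := by rw [h2]; trivial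
    exact this
  rw [← hK, sup_eq_left.2 h3]

variable {R : Type u} [Ring R]

/-- The right ideal `eR`, described as the set of `e`-fixed elements. -/
def rightIdealOf (e : R) : Submodule Rᵐᵒᵖ R where
  carrier := {x : R | e * x = x}
  add_mem' := fun {a b} ha hb => by
    simp only [Set.mem_setOf_eq] at *
    rw [mul_add, ha, hb]
  zero_mem' := by simp
  smul_mem' := fun c x hx => by
    simp only [Set.mem_setOf_eq] at *
    show e * (x * c.unop) = x * c.unop
    rw [← mul_assoc, hx]

/-- The set of non-generators of `eR`, for a local idempotent `e`:
the greatest proper submodule of `eR`. -/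
def maxSubOf (e : R) (he : IsLocalIdempotent e) : Submodule Rᵐᵒᵖ R where
  carrier := {x : R | e * x = x ∧ ¬∃ r : R, x * r = e}
  zero_mem' := by
    refine ⟨by simp, ?_⟩
    rintro ⟨r, hr⟩
    rw [zero_mul] at hr
    exact he.2.1 hr.symm
  add_mem' := fun {a b} ha hb => by
    refine ⟨by rw [mul_add, ha.1, hb.1], ?_⟩
    rintro ⟨r, hr⟩
    have h3a : e * (a * r) * e = a * (r * e) := by
      rw [← mul_assoc e a r, ha.1, mul_assoc]
    have h3b : e * (b * r) * e = b * (r * e) := by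
      rw [← mul_assoc e b r, hb.1, mul_assoc]
    have h5 : e = a * (r * e) + b * (r * e) := by
      rw [← add_mul, ← mul_assoc, hr, he.1]
    rcases he.2.2 (a * r) with ⟨y, h1, -⟩ | ⟨y, h1, -⟩
    · rw [h3a, mul_assoc] at h1
      exact ha.2 ⟨_, h1⟩
    · have h4 : e - e * (a * r) * e = b * (r * e) := by
        rw [h3a]
        exact sub_eq_of_eq_add' h5
      rw [h4, mul_assoc] at h1
      exact hb.2 ⟨_, h1⟩
  smul_mem' := fun c x hx => by
    refine ⟨?_, ?_⟩
    · show e * (x * c.unop) = x * c.unop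
      rw [← mul_assoc, hx.1]
    · rintro ⟨r, hr⟩
      refine hx.2 ⟨c.unop * r, ?_⟩
      rw [← mul_assoc]
      exact hr

theorem maxSubOf_le (e : R) (he : IsLocalIdempotent e) : maxSubOf e he ≤ rightIdealOf e :=
  fun _ hx => hx.1

theorem supf_maxSub (e : R) (he : IsLocalIdempotent e) :
    Supf ((maxSubOf e he).comap (rightIdealOf e).subtype) := by
  intro K hK
  have heS : e ∈ rightIdealOf e := he.1
  have hmem : (⟨e, heS⟩ : rightIdealOf e) ∈
      K ⊔ (maxSubOf e he).comap (rightIdealOf e).subtype := by rw [hK]; trivial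
  obtain ⟨u, hu, w, hw, huw⟩ := Submodule.mem_sup.1 hmem
  have hu2 : ∃ r : R, (u : R) * r = e := by
    by_contra hno
    push_neg at hno
    have humem : (u : R) ∈ maxSubOf e he := ⟨u.2, fun ⟨r, hr⟩ => hno r hr⟩
    have hcoe : (u : R) + (w : R) = e := by
      have := congrArg Subtype.val huw
      simpa using this
    have hemem : e ∈ maxSubOf e he := by
      have h8 := (maxSubOf e he).add_mem humem hw
      rwa [Submodule.subtype_apply, hcoe] at h8
    exact hemem.2 ⟨e, he.1⟩
  obtain ⟨r, hr⟩ := hu2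
  have he_in_K : (⟨e, heS⟩ : rightIdealOf e) ∈ K := by
    have h6 := K.smul_mem (op r) hu
    have heq : (op r) • u = (⟨e, heS⟩ : rightIdealOf e) :=
      Subtype.ext (show (u : R) * r = e from hr)
    rwa [heq] at h6
  rw [eq_top_iff]
  rintro ⟨x, hx⟩ -
  have h7 : (op x) • (⟨e, heS⟩ : rightIdealOf e) = ⟨x, hx⟩ :=
    Subtype.ext (show e * x = x from hx)
  rw [← h7]
  exact K.smul_mem _ he_in_K

/-- `R` is a projective right module over itself. -/
def unopLinearEquiv (R : Type u) [Ring R] : Rᵐᵒᵖ ≃ₗ[Rᵐᵒᵖ] R where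
  toFun := unop
  invFun := op
  map_add' := fun _ _ => rfl
  map_smul' := fun _ _ => rfl
  left_inv := fun _ => rfl
  right_inv := fun _ => rfl

/-- The corner projection `R → eR`. -/
def cornerProj (e : R) (he : IsIdempotentElem e) : R →ₗ[Rᵐᵒᵖ] ↥(rightIdealOf e) where
  toFun r := ⟨e * r, show e * (e * r) = e * r by rw [← mul_assoc, he]⟩
  map_add' a b := Subtype.ext (mul_add e a b)
  map_smul' c a := Subtype.ext (show e * (a * c.unop) = (e * a) * c.unop from (mul_assoc e a c.unop).symm)

theorem projective_rightIdealOf (e : R) (he : IsIdempotentElem e) :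
    Module.Projective Rᵐᵒᵖ ↥(rightIdealOf e) := by
  haveI : Module.Projective Rᵐᵒᵖ R := Module.Projective.of_equiv (unopLinearEquiv R)
  exact Module.Projective.of_split (rightIdealOf e).subtype (cornerProj e he)
    (LinearMap.ext fun x => Subtype.ext x.2)

theorem exists_finset_decomp {R : Type u} [Ring R] [UniformSpace R] [IsUniformAddGroup R]
    [IsTopologicalRing R] {Z : Type u}
    (e : Z → R) (h0 : Filter.Tendsto e Filter.cofinite (nhds 0)) (hs : HasSum e 1)
    {N : Type u} [AddCommGroup N] [Module Rᵐᵒᵖ N] (n : N)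
    (hop : IsOpen {r : R | op r • n = 0}) :
    ∃ A : Finset Z, (∑ z ∈ A, op (e z) • n) = n := by
  classical
  let ann : AddSubgroup R :=
    { carrier := {r : R | op r • n = 0}
      zero_mem' := by simp
      add_mem' := fun {a b} ha hb => by
        simp only [Set.mem_setOf_eq] at *
        rw [op_add, add_smul, ha, hb, add_zero]
      neg_mem' := fun {a} ha => by
        simp only [Set.mem_setOf_eq] at *
        rw [op_neg, neg_smul, ha, neg_zero] }
  have hmemnhds : {r : R | op r • n = 0} ∈ nhds (0 : R) := hop.mem_nhds (by simp)
  have hfin : {z : Z | ¬ op (e z) • n = 0}.Finite := by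
    have h1 : (e ⁻¹' {r : R | op r • n = 0})ᶜ.Finite := by
      have := h0 hmemnhds
      rw [Filter.mem_map, Filter.mem_cofinite] at this
      exact this
    have h2 : {z : Z | ¬ op (e z) • n = 0} = (e ⁻¹' {r : R | op r • n = 0})ᶜ := by
      ext z; simp
    rw [h2]
    exact h1
  refine ⟨hfin.toFinset, ?_⟩
  have hsum_smul : ∀ s : Finset Z, op (∑ z ∈ s, e z) • n = ∑ z ∈ s, op (e z) • n := by
    intro s
    have h3 : op (∑ z ∈ s, e z) = ∑ z ∈ s, op (e z) :=
      map_sum (opAddEquiv : R ≃+ Rᵐᵒᵖ) e s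
    rw [h3, Finset.sum_smul]
  set A := hfin.toFinset with hA
  set m := ∑ z ∈ A, op (e z) • n with hm
  set r₀ := ∑ z ∈ A, e z with hr₀
  have hr₀m : op r₀ • n = m := hsum_smul A
  have hCclosed : IsClosed {r : R | op r • n = m} := by
    have h1 : IsClosed (ann : Set R) := ann.isClosed_of_isOpen hop
    have h2 : {r : R | op r • n = m} = (fun r => r - r₀) ⁻¹' (ann : Set R) := by
      ext r
      simp only [Set.mem_setOf_eq, Set.mem_preimage, SetLike.mem_coe]
      show op r • n = m ↔ op (r - r₀) • n = 0
      rw [op_sub, sub_smul, hr₀m, sub_eq_zero]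
    rw [h2]
    exact h1.preimage (continuous_id.sub continuous_const)
  have hev : ∀ᶠ s in Filter.atTop, (∑ z ∈ s, e z) ∈ {r : R | op r • n = m} := by
    refine Filter.eventually_atTop.2 ⟨A, fun s hs' => ?_⟩
    show op (∑ z ∈ s, e z) • n = m
    rw [hsum_smul s, hm]
    refine (Finset.sum_subset hs' fun z _ hz => ?_).symm
    have : ¬ z ∈ {z : Z | ¬ op (e z) • n = 0} := by
      rwa [← Set.Finite.mem_toFinset hfin]
    simpa using this
  haveI : (Filter.atTop : Filter (Finset Z)).NeBot := Filter.atTop_neBot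
  have h1C : (1 : R) ∈ {r : R | op r • n = m} := hCclosed.mem_of_tendsto hs hev
  have : op (1 : R) • n = m := h1C
  rw [op_one, one_smul] at this
  exact this.symm

theorem fg_discrete_has_projective_cover_of_topSemiperfect
    (R : Type u) [Ring R] [UniformSpace R] [IsUniformAddGroup R] [IsTopologicalRing R]
    [T2Space R] [CompleteSpace R] (hRL : IsRightLinearTopology R)
    (hSP : IsTopSemiperfect R)
    (N : Type u) [AddCommGroup N] [Module Rᵐᵒᵖ N]
    (hfg : Module.Finite Rᵐᵒᵖ N) (hdisc : IsDiscreteModule R N) :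
    HasProjCover Rᵐᵒᵖ N := by
  classical
  obtain ⟨Z, e, h0, hloc, -, hsum⟩ := hSP
  haveI := hfg
  -- families of generators adapted to the idempotents
  have hex : ∃ k : ℕ, ∃ (n : Fin k → N) (ε : Fin k → R),
      (∀ j, IsLocalIdempotent (ε j)) ∧ (∀ j, op (ε j) • n j = n j) ∧
        Submodule.span Rᵐᵒᵖ (Set.range n) = ⊤ := by
    obtain ⟨t, g, hg⟩ := Module.Finite.exists_fin (R := Rᵐᵒᵖ) (M := N)
    choose A hA using fun i : Fin t => exists_finset_decomp e h0 hsum (g i) (hdisc (g i))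
    let ι := (i : Fin t) × {z : Z // z ∈ A i}
    let σ := (Fintype.equivFin ι).symm
    refine ⟨Fintype.card ι, fun j => op (e (σ j).2.1) • g (σ j).1, fun j => e (σ j).2.1,
      fun j => hloc _, fun j => ?_, ?_⟩
    · rw [← mul_smul, ← op_mul, (hloc _).1]
    · rw [eq_top_iff, ← hg, Submodule.span_le]
      rintro _ ⟨i, rfl⟩
      rw [← hA i, ← Finset.sum_attach (A i) (fun z => op (e z) • g i)]
      apply Submodule.sum_mem
      intro w _
      apply Submodule.subset_span
      refine ⟨σ.symm ⟨i, w⟩, ?_⟩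
      show op (e (σ (σ.symm ⟨i, w⟩)).2.1) • g (σ (σ.symm ⟨i, w⟩)).1 = op (e ↑w) • g i
      rw [Equiv.apply_symm_apply]
  obtain ⟨k, ⟨n, ε, hloc', hfix, hspan⟩, hmin⟩ :
      ∃ k, (∃ (n : Fin k → N) (ε : Fin k → R),
        (∀ j, IsLocalIdempotent (ε j)) ∧ (∀ j, op (ε j) • n j = n j) ∧
          Submodule.span Rᵐᵒᵖ (Set.range n) = ⊤) ∧
        ∀ m, m < k → ¬(∃ (n : Fin m → N) (ε : Fin m → R),
          (∀ j, IsLocalIdempotent (ε j)) ∧ (∀ j, op (ε j) • n j = n j) ∧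
            Submodule.span Rᵐᵒᵖ (Set.range n) = ⊤) :=
    ⟨Nat.find hex, Nat.find_spec hex, fun m hm => Nat.find_min hex hm⟩
  let S : Fin k → Submodule Rᵐᵒᵖ R := fun j => rightIdealOf (ε j)
  let P : Type u := (j : Fin k) → ↥(S j)
  haveI hproj : ∀ j, Module.Projective Rᵐᵒᵖ ↥(S j) :=
    fun j => projective_rightIdealOf (ε j) (hloc' j).1
  haveI hdsproj : Module.Projective Rᵐᵒᵖ (DirectSum (Fin k) fun j => ↥(S j)) := by
    delta DirectSum
    exact inferInstance
  haveI hPproj : Module.Projective Rᵐᵒᵖ P :=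
    Module.Projective.of_equiv
      (DirectSum.linearEquivFunOnFintype Rᵐᵒᵖ (Fin k) (fun j => ↥(S j)))
  let p : P →ₗ[Rᵐᵒᵖ] N :=
    { toFun := fun x => ∑ j, op ((x j : R)) • n j
      map_add' := fun x y => by
        rw [← Finset.sum_add_distrib]
        refine Finset.sum_congr rfl fun j _ => ?_
        show op ((x j : R) + (y j : R)) • n j = _
        rw [op_add, add_smul]
      map_smul' := fun c x => by
        show (∑ j, op (((c • x) j : R)) • n j) = c • ∑ j, op ((x j : R)) • n j
        rw [Finset.smul_sum]
        refine Finset.sum_congr rfl fun j _ => ?_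
        show op ((x j : R) * c.unop) • n j = c • (op (x j : R) • n j)
        rw [op_mul, op_unop, mul_smul] }
  have hNj : ∀ j, n j ∈ LinearMap.range p := by
    intro j
    refine ⟨Pi.single j (⟨ε j, (hloc' j).1⟩ : ↥(S j)), ?_⟩
    show (∑ i, op (((Pi.single j (⟨ε j, (hloc' j).1⟩ : ↥(S j)) : P) i : R)) • n i) = n j
    rw [Finset.sum_eq_single j]
    · rw [Pi.single_eq_same]
      exact hfix j
    · intro i _ hij
      rw [Pi.single_eq_of_ne hij]
      show op ((0 : ↥(S i)) : R) • n i = 0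
      rw [ZeroMemClass.coe_zero, op_zero, zero_smul]
    · intro h; exact absurd (Finset.mem_univ j) h
  have hsurj : Function.Surjective p := by
    rw [← LinearMap.range_eq_top, eq_top_iff, ← hspan, Submodule.span_le]
    rintro _ ⟨j, rfl⟩
    exact hNj j
  -- kernel elements have all coordinates in the greatest proper submodules
  have hker : ∀ x : P, p x = 0 → ∀ j, ((x j : R)) ∈ maxSubOf (ε j) (hloc' j) := by
    intro x hx j
    refine ⟨(x j).2, ?_⟩
    rintro ⟨r, hr⟩
    have h1 : k - 1 + 1 = k := by have := j.pos; omega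
    let emb : Fin (k - 1) → Fin k := fun t => Fin.cast h1 ((Fin.cast h1.symm j).succAbove t)
    have hemb : ∀ i : Fin k, i ≠ j → ∃ t, emb t = i := by
      intro i hij
      obtain ⟨t, ht⟩ := Fin.exists_succAbove_eq
        (x := Fin.cast h1.symm i) (y := Fin.cast h1.symm j)
        (fun hcontra => hij (Fin.ext (by simpa using congrArg Fin.val hcontra)))
      exact ⟨t, Fin.ext (by simp [emb, ht])⟩
    have hsub : ∀ i : Fin k, i ≠ j →
        n i ∈ Submodule.span Rᵐᵒᵖ (Set.range (fun t => n (emb t))) := by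
      intro i hij
      obtain ⟨t, ht⟩ := hemb i hij
      exact Submodule.subset_span ⟨t, by show n (emb t) = n i; rw [ht]⟩
    have hnj : n j ∈ Submodule.span Rᵐᵒᵖ (Set.range (fun t => n (emb t))) := by
      have hsum0 : (∑ i, op ((x i : R)) • n i) = 0 := hx
      have hjterm : op ((x j : R)) • n j
          = -∑ i ∈ Finset.univ.erase j, op ((x i : R)) • n i := by
        have h2 := Finset.sum_erase_add Finset.univ
          (fun i => op ((x i : R)) • n i) (Finset.mem_univ j)
        rw [hsum0] at h2
        exact eq_neg_of_add_eq_zero_right h2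
      have h3 : n j = op r • (op ((x j : R)) • n j) := by
        rw [← mul_smul, ← op_mul, hr, hfix j]
      rw [h3, hjterm]
      apply Submodule.smul_mem
      rw [Submodule.neg_mem_iff]
      apply Submodule.sum_mem
      intro i hi
      exact Submodule.smul_mem _ _ (hsub i (Finset.ne_of_mem_erase hi))
    refine absurd ?_ (hmin (k - 1) (by have := j.pos; omega))
    refine ⟨fun t => n (emb t), fun t => ε (emb t),
      fun t => hloc' _, fun t => hfix _, ?_⟩
    rw [eq_top_iff, ← hspan, Submodule.span_le]
    rintro _ ⟨i, rfl⟩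
    by_cases hij : i = j
    · subst hij; exact hnj
    · exact hsub i hij
  have hkerle : LinearMap.ker p ≤ ⨆ j : Fin k,
      Submodule.map (LinearMap.single Rᵐᵒᵖ (fun j => ↥(S j)) j)
        ((maxSubOf (ε j) (hloc' j)).comap (S j).subtype) := by
    intro x hx
    have hxj := hker x hx
    have hrepr : x = ∑ j, Pi.single j (x j) := (Finset.univ_sum_single x).symm
    rw [hrepr]
    apply Submodule.sum_mem
    intro j _
    apply Submodule.mem_iSup_of_mem j
    exact ⟨x j, hxj j, rfl⟩
  have hsupf : Supf (LinearMap.ker p) := by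
    apply Supf.of_le hkerle
    apply supf_iSup
    intro j
    exact supf_map _ (supf_maxSub (ε j) (hloc' j))
  exact ⟨P, inferInstance, inferInstance, p, hPproj, hsurj, fun K hK => hsupf K hK⟩
end

section
/- Let 𝔯 be a topologically semiperfect complete, separated, right linear topological ring. Then the topological Jacobson radical 𝔥(𝔯) is equal to the topological closure of the abstract Jacobson radical H(𝔯) in 𝔯. -/
open Filter MulOpposite

universe u

section AuxLemmas

variable {R : Type u} [Ring R]

lemma submodule_isOpen_of_mem_nhds {R : Type u} [Ring R] [TopologicalSpace R]
    [IsTopologicalRing R] (N : Submodule Rᵐᵒᵖ R) (h : (N : Set R) ∈ nhds (0 : R)) :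
    IsOpen (N : Set R) :=
  N.toAddSubgroup.isOpen_of_mem_nhds h

lemma submodule_isClosed_of_isOpen {R : Type u} [Ring R] [TopologicalSpace R]
    [IsTopologicalRing R] (N : Submodule Rᵐᵒᵖ R) (h : IsOpen (N : Set R)) :
    IsClosed (N : Set R) :=
  AddSubgroup.isClosed_of_isOpen N.toAddSubgroup h

lemma mem_absJacobson_iff {r : R} :
    r ∈ absJacobson R ↔ ∀ M : Submodule Rᵐᵒᵖ R, IsCoatom M → r ∈ M := by
  simp only [absJacobson, Set.mem_iInter, Set.mem_setOf_eq, SetLike.mem_coe]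

lemma mem_topJacobson_iff [TopologicalSpace R] {r : R} :
    r ∈ topJacobson R ↔
      ∀ M : Submodule Rᵐᵒᵖ R, IsOpen (M : Set R) → IsCoatom M → r ∈ M := by
  simp only [topJacobson, Set.mem_iInter, Set.mem_setOf_eq, SetLike.mem_coe, and_imp]

lemma topJacobson_mul_op [TopologicalSpace R] {r : R}
    (hr : r ∈ topJacobson R) (t : R) : r * t ∈ topJacobson R := by
  rw [mem_topJacobson_iff] at hr ⊢
  intro M hMo hMc
  have := M.smul_mem (op t) (hr M hMo hMc)
  rwa [op_smul_eq_mul] at this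

lemma topJacobson_mul_left [TopologicalSpace R] [IsTopologicalRing R] {r : R}
    (hr : r ∈ topJacobson R) (x : R) : x * r ∈ topJacobson R := by
  rw [mem_topJacobson_iff] at hr ⊢
  intro M hMo hMc
  set M' : Submodule Rᵐᵒᵖ R :=
    { carrier := {a | x * a ∈ M}
      add_mem' := by
        intro a b ha hb
        simp only [Set.mem_setOf_eq] at ha hb ⊢
        rw [mul_add]
        exact M.add_mem ha hb
      zero_mem' := by simp only [Set.mem_setOf_eq, mul_zero]; exact M.zero_mem
      smul_mem' := by
        intro c a ha
        simp only [Set.mem_setOf_eq] at ha ⊢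
        have hca : c • a = a * unop c := op_smul_eq_mul (unop c) _
        rw [hca, ← mul_assoc, ← op_smul_eq_mul]
        exact M.smul_mem _ ha } with hM'def
  by_cases hM' : M' = ⊤
  · have : r ∈ M' := hM' ▸ Submodule.mem_top
    exact this
  · have hopen : IsOpen (M' : Set R) := by
      have : (M' : Set R) = (fun a => x * a) ⁻¹' (M : Set R) := rfl
      rw [this]
      exact hMo.preimage (continuous_mul_left x)
    have hcoatom : IsCoatom M' := by
      refine ⟨hM', ?_⟩
      intro b hb
      obtain ⟨u, hub, hunm⟩ := SetLike.exists_of_lt hb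
      have hxu : x * u ∉ M := hunm
      have hsup : M ⊔ Submodule.span Rᵐᵒᵖ {x * u} = ⊤ :=
        hMc.2 _ (left_lt_sup.mpr fun hle =>
          hxu (hle (Submodule.mem_span_singleton_self _)))
      rw [Submodule.eq_top_iff']
      intro w
      have hw : x * w ∈ M ⊔ Submodule.span Rᵐᵒᵖ {x * u} := by
        rw [hsup]; exact Submodule.mem_top
      obtain ⟨m₀, hm₀, p, hp, hmp⟩ := Submodule.mem_sup.mp hw
      obtain ⟨c, hc⟩ := Submodule.mem_span_singleton.mp hp
      have hp' : p = x * (u * unop c) := by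
        have : c • (x * u) = (x * u) * unop c := op_smul_eq_mul (unop c) _
        rw [← hc, this, mul_assoc]
      have h1 : w - u * unop c ∈ M' := by
        show x * (w - u * unop c) ∈ M
        have : x * (w - u * unop c) = m₀ := by
          rw [mul_sub, ← hp']
          have : p = x * w - m₀ := by rw [← hmp]; abel
          rw [this]; abel
        rw [this]; exact hm₀
      have h2 : u * unop c ∈ b := by
        rw [← op_smul_eq_mul]
        exact b.smul_mem _ hub
      have := b.add_mem (hb.le h1) h2
      rwa [sub_add_cancel] at this
    exact hr M' hopen hcoatom

lemma exists_avoiding_open_ideal [TopologicalSpace R] [IsTopologicalRing R] [T2Space R]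
    (hRL : IsRightLinearTopology R) {e : R} (hne : e ≠ 0) :
    ∃ I : Submodule Rᵐᵒᵖ R, IsOpen (I : Set R) ∧ ∀ t ∈ I, e * t ≠ e := by
  by_contra hcon
  push_neg at hcon
  apply hne
  have hA : IsClosed {t : R | e * t = e} :=
    isClosed_eq (continuous_mul_left e) continuous_const
  have h0 : (0 : R) ∈ closure {t : R | e * t = e} := by
    rw [mem_closure_iff_nhds]
    intro U hU
    obtain ⟨I, hIo, hIU⟩ := hRL U hU
    obtain ⟨t, htI, hte⟩ := hcon I hIo
    exact ⟨t, hIU htI, hte⟩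
  rw [hA.closure_eq] at h0
  have : e * 0 = e := h0
  rwa [mul_zero, eq_comm] at this

lemma exists_open_coatom_avoiding [TopologicalSpace R] [IsTopologicalRing R] [T2Space R]
    (hRL : IsRightLinearTopology R) {e : R} (hloc : IsLocalIdempotent e) :
    ∃ M : Submodule Rᵐᵒᵖ R, IsOpen (M : Set R) ∧ IsCoatom M ∧ e ∉ M := by
  obtain ⟨hee, hne, hlocal⟩ := hloc
  obtain ⟨I, hIo, hI⟩ := exists_avoiding_open_ideal hRL hne
  refine ⟨{ carrier := {a | ∀ s : R, e * (a * s) ≠ e}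
            add_mem' := ?_
            zero_mem' := ?_
            smul_mem' := ?_ }, ?_, ⟨?_, ?_⟩, ?_⟩
  · -- add_mem'
    intro a b ha hb
    simp only [Set.mem_setOf_eq] at ha hb ⊢
    intro s heq
    rcases hlocal (a * s) with ⟨y, hy1, _⟩ | ⟨y, hy1, _⟩
    · refine ha (s * (e * (e * y * e))) ?_
      calc e * (a * (s * (e * (e * y * e)))) = e * (a * s) * e * (e * y * e) := by
            noncomm_ring
        _ = e := hy1
    · have hsplit : e * (a * s) * e + e * (b * s) * e = e := by
        have h2 := congrArg (· * e) heq
        beta_reduce at h2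
        calc e * (a * s) * e + e * (b * s) * e = e * ((a + b) * s) * e := by noncomm_ring
          _ = e * e := h2
          _ = e := hee
      have hdiff : e - e * (a * s) * e = e * (b * s) * e := by
        have h5 := congrArg (fun t => t - e * (a * s) * e) hsplit
        beta_reduce at h5
        rw [add_sub_cancel_left] at h5
        exact h5.symm
      rw [hdiff] at hy1
      refine hb (s * (e * (e * y * e))) ?_
      calc e * (b * (s * (e * (e * y * e)))) = e * (b * s) * e * (e * y * e) := by
            noncomm_ring
        _ = e := hy1
  · -- zero_mem'
    simp only [Set.mem_setOf_eq]
    intro s heq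
    rw [zero_mul, mul_zero] at heq
    exact hne heq.symm
  · -- smul_mem'
    intro c a ha
    simp only [Set.mem_setOf_eq] at ha ⊢
    intro s heq
    refine ha (unop c * s) ?_
    have hca : c • a = a * unop c := op_smul_eq_mul (unop c) _
    rw [hca] at heq
    rw [← mul_assoc a (unop c) s]
    exact heq
  · -- open
    apply submodule_isOpen_of_mem_nhds
    refine Filter.mem_of_superset (hIo.mem_nhds I.zero_mem) ?_
    intro a haI
    intro s heq
    have : a * s ∈ I := by
      rw [← op_smul_eq_mul]; exact I.smul_mem _ haI
    exact hI _ this heq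
  · -- ≠ ⊤
    intro htop
    have : e ∈ ({a | ∀ s : R, e * (a * s) ≠ e} : Set R) := by
      have := htop ▸ (Submodule.mem_top (R := Rᵐᵒᵖ) (x := e))
      exact this
    exact this 1 (by rw [mul_one, hee])
  · -- maximal
    intro b hb
    obtain ⟨u, hub, hunm⟩ := SetLike.exists_of_lt hb
    have hunm' : ∃ s : R, e * (u * s) = e := by
      by_contra hc
      push_neg at hc
      exact hunm hc
    obtain ⟨s, hs⟩ := hunm'
    rw [Submodule.eq_top_iff']
    intro w
    have h1 : w - u * (s * (e * w)) ∈ ({a | ∀ s' : R, e * (a * s') ≠ e} : Set R) := by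
      intro s' heq
      have hz : e * (w - u * (s * (e * w))) = 0 := by
        calc e * (w - u * (s * (e * w)))
            = e * w - e * (u * s) * (e * w) := by noncomm_ring
          _ = e * w - e * (e * w) := by rw [hs]
          _ = 0 := by rw [← mul_assoc, hee]; abel
      rw [← mul_assoc, hz, zero_mul] at heq
      exact hne heq.symm
    have h2 : u * (s * (e * w)) ∈ b := by
      rw [← op_smul_eq_mul]
      exact b.smul_mem _ hub
    have := b.add_mem (hb.le h1) h2
    rwa [sub_add_cancel] at this
  · -- e ∉ M
    intro hmem
    exact hmem 1 (by rw [mul_one, hee])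

lemma right_inv_one_sub {e x y : R} (hee : e * e = e)
    (h1 : (e - e * x * e) * (e * y * e) = e) :
    ∃ w : R, (1 - e * x) * w = 1 := by
  set v := e * y * e with hv
  have hev : e * v = v := by rw [hv, ← mul_assoc, ← mul_assoc, hee]
  have h3 : e * x * v = v - e := by
    have h := h1
    rw [sub_mul, hev, mul_assoc (e * x) e v, hev] at h
    have h4 := congrArg (fun t => v - t) h
    beta_reduce at h4
    rwa [sub_sub_cancel] at h4
  refine ⟨v + v * x - v * x * e + 1 - e, ?_⟩
  have expand : (e * x) * (v + v * x - v * x * e + 1 - e)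
      = (e * x * v) + (e * x * v) * x - ((e * x * v) * x) * e + e * x - e * x * e := by
    noncomm_ring
  rw [show (1 - e * x) * (v + v * x - v * x * e + 1 - e)
      = (v + v * x - v * x * e + 1 - e) - (e * x) * (v + v * x - v * x * e + 1 - e) from by
        noncomm_ring,
    expand, h3]
  noncomm_ring

lemma mul_mem_absJacobson [TopologicalSpace R] [IsTopologicalRing R] [T2Space R]
    (hRL : IsRightLinearTopology R) {e r : R} (hloc : IsLocalIdempotent e)
    (hr : r ∈ topJacobson R) : e * r ∈ absJacobson R := by
  obtain ⟨M₀, hM₀o, hM₀c, heM₀⟩ := exists_open_coatom_avoiding hRL hloc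
  obtain ⟨hee, hne, hlocal⟩ := hloc
  rw [mem_absJacobson_iff]
  intro M hM
  by_contra hnm
  have hsup : M ⊔ Submodule.span Rᵐᵒᵖ {e * r} = ⊤ :=
    hM.2 _ (left_lt_sup.mpr fun hle => hnm (hle (Submodule.mem_span_singleton_self _)))
  have hone : (1 : R) ∈ M ⊔ Submodule.span Rᵐᵒᵖ {e * r} := by
    rw [hsup]; exact Submodule.mem_top
  obtain ⟨m, hm, p, hp, hmp⟩ := Submodule.mem_sup.mp hone
  obtain ⟨c, hc⟩ := Submodule.mem_span_singleton.mp hp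
  set s := unop c with hsdef
  have hp' : p = e * r * s := by
    have : c • (e * r) = (e * r) * unop c := op_smul_eq_mul (unop c) _
    rw [← hc, this]
  rcases hlocal (r * s) with ⟨y, hy1, _⟩ | ⟨y, hy1, _⟩
  · -- Case A: e ∈ topJacobson, contradicting e ∉ M₀
    set t := s * (e * (e * y * e)) with htdef
    have hrt : r * t ∈ topJacobson R := topJacobson_mul_op hr t
    have h2 : e * (r * t) ∈ topJacobson R := topJacobson_mul_left hrt e
    have h3 : e * (r * t) = e := by
      calc e * (r * t) = e * (r * s) * e * (e * y * e) := by rw [htdef]; noncomm_ring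
        _ = e := hy1
    rw [h3] at h2
    exact heM₀ (mem_topJacobson_iff.mp h2 M₀ hM₀o hM₀c)
  · -- Case B: 1 - e*r*s is right invertible, so 1 ∈ M
    obtain ⟨w, hw⟩ := right_inv_one_sub hee hy1
    have hm' : m = 1 - e * (r * s) := by
      have : m = 1 - p := by rw [← hmp]; abel
      rw [this, hp', mul_assoc]
    have h1M : (1 : R) ∈ M := by
      have hmw : m * w ∈ M := by
        rw [← op_smul_eq_mul]; exact M.smul_mem _ hm
      rw [hm', hw] at hmw
      exact hmw
    refine hM.1 (Submodule.eq_top_iff'.mpr fun a => ?_)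
    have := M.smul_mem (op a) h1M
    rwa [op_smul_eq_mul, one_mul] at this

end AuxLemmas

theorem topJacobson_eq_closure_absJacobson
    (R : Type u) [Ring R] [UniformSpace R] [IsUniformAddGroup R] [IsTopologicalRing R]
    [T2Space R] [CompleteSpace R] (hRL : IsRightLinearTopology R)
    (hSP : IsTopSemiperfect R) :
    topJacobson R = closure (absJacobson R) := by
  obtain ⟨Z, e, hconv, hloc, horth, hsum⟩ := hSP
  apply Set.Subset.antisymm
  · -- topJacobson ⊆ closure absJacobson
    intro r hr
    classical
    rw [mem_closure_iff_nhds]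
    intro U hU
    have hV : (fun x => r + x) ⁻¹' U ∈ nhds (0 : R) := by
      have hcont := (continuous_add_left r).tendsto (0 : R)
      rw [add_zero] at hcont
      exact hcont hU
    obtain ⟨I, hIo, hIV⟩ := hRL _ hV
    have hev : ∀ᶠ z in Filter.cofinite, e z ∈ (I : Set R) :=
      hconv.eventually (hIo.mem_nhds I.zero_mem)
    have hFfin : {z : Z | e z ∉ (I : Set R)}.Finite :=
      Filter.eventually_cofinite.mp hev
    set F := hFfin.toFinset with hFdef
    set f : Z → R := fun z => e z * r with hfdef
    have hf : HasSum f r := by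
      have := hsum.mul_right r
      rwa [one_mul] at this
    set g : Z → R := fun z => if z ∈ F then f z else 0 with hgdef
    have hg : HasSum g (∑ z ∈ F, f z) := by
      have hgs : HasSum g (∑ z ∈ F, g z) :=
        hasSum_sum_of_ne_finset_zero (fun b hb => by simp only [hgdef]; exact if_neg hb)
      have hsum_eq : (∑ z ∈ F, g z) = ∑ z ∈ F, f z :=
        Finset.sum_congr rfl (fun z hz => by simp only [hgdef]; exact if_pos hz)
      rwa [hsum_eq] at hgs
    set h := ∑ z ∈ F, f z with hhdef
    have hsub : HasSum (fun z => f z - g z) (r - h) := hf.sub hg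
    have hclosedI : IsClosed (I : Set R) :=
      submodule_isClosed_of_isOpen I hIo
    have hrh : r - h ∈ I := by
      refine hclosedI.mem_of_tendsto hsub (Filter.Eventually.of_forall ?_)
      intro t
      show (∑ z ∈ t, (f z - g z)) ∈ I
      refine Submodule.sum_mem I (fun z _ => ?_)
      by_cases hz : z ∈ F
      · simp only [hgdef, if_pos hz, sub_self]
        exact I.zero_mem
      · have hzI : e z ∈ I := by
          by_contra hcon
          exact hz (hFfin.mem_toFinset.mpr hcon)
        simp only [hgdef, if_neg hz, sub_zero, hfdef]
        rw [← op_smul_eq_mul]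
        exact I.smul_mem _ hzI
    have hhJ : h ∈ absJacobson R := by
      rw [mem_absJacobson_iff]
      intro M hM
      exact Submodule.sum_mem M (fun z _ =>
        mem_absJacobson_iff.mp (mul_mem_absJacobson hRL (hloc z) hr) M hM)
    refine ⟨h, ?_, hhJ⟩
    have hhr : h - r ∈ I := by
      have := I.neg_mem hrh
      rwa [neg_sub] at this
    have := hIV hhr
    simpa using this
  · -- closure absJacobson ⊆ topJacobson
    have hsubset : absJacobson R ⊆ topJacobson R := by
      intro x hx
      rw [mem_topJacobson_iff]
      intro M hMo hMc
      exact mem_absJacobson_iff.mp hx M hMc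
    have hclosed : IsClosed (topJacobson R) := by
      apply isClosed_biInter
      intro M hM
      exact submodule_isClosed_of_isOpen M hM.1
    exact closure_minimal hsubset hclosed
end

section
/- Let 𝔯 be a topologically semiperfect complete, separated, right linear topological ring, 𝔥 = 𝔥(𝔯) its topological Jacobson radical, and 𝔰 = 𝔯/𝔥 the quotient ring. Then any finite family (g_w)_{w∈W} of pairwise orthogonal primitive idempotents in 𝔰 can be lifted modulo 𝔥 to a finite family (e_w)_{w∈W} of pairwise orthogonal local idempotents in 𝔯, i.e., each e_w is a local idempotent, the e_w are pairwise orthogonal, and the image of e_w in 𝔰 equals g_w for every w ∈ W. -/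
open Filter MulOpposite

universe u

set_option linter.unusedSectionVars false
section Lemmas
variable {R : Type u} [Ring R] [TopologicalSpace R] [IsTopologicalRing R]

lemma mem_tj_iff {x : R} :
    x ∈ topJacobson R ↔
      ∀ I : Submodule Rᵐᵒᵖ R, IsOpen (I : Set R) → IsCoatom I → x ∈ I := by
  simp only [topJacobson, Set.mem_iInter, Set.mem_setOf_eq, SetLike.mem_coe, and_imp]

def lmulL (a : R) : R →ₗ[Rᵐᵒᵖ] R where
  toFun x := a * x
  map_add' x y := mul_add a x y
  map_smul' r x := by
    simp only [MulOpposite.smul_eq_mul_unop, RingHom.id_apply, mul_assoc]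

@[simp] lemma lmulL_apply (a x : R) : lmulL a x = a * x := rfl

lemma smod_eq_top_of_one_mem {J : Submodule Rᵐᵒᵖ R} (h : (1 : R) ∈ J) : J = ⊤ := by
  rw [Submodule.eq_top_iff']
  intro x
  have := J.smul_mem (op x) h
  rwa [op_smul_eq_mul, one_mul] at this

lemma exists_open_coatom_ge {K I : Submodule Rᵐᵒᵖ R} (h1 : (1 : R) ∉ K) (hIK : I ≤ K)
    (hI : IsOpen (I : Set R)) :
    ∃ M : Submodule Rᵐᵒᵖ R, IsOpen (M : Set R) ∧ IsCoatom M ∧ K ≤ M := by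
  obtain ⟨M, hKM, hMmem, hMmax⟩ :=
    zorn_le_nonempty₀ {J : Submodule Rᵐᵒᵖ R | (1 : R) ∉ J} (fun c hcs hchain y hy => by
      refine ⟨sSup c, ?_, fun z hz => le_sSup hz⟩
      intro hmem
      rw [Submodule.mem_sSup_of_directed ⟨y, hy⟩ hchain.directedOn] at hmem
      obtain ⟨p, hp, h1p⟩ := hmem
      exact hcs hp h1p) K h1
  have hMopen : IsOpen (M : Set R) :=
    AddSubgroup.isOpen_mono (H₁ := I.toAddSubgroup) (H₂ := M.toAddSubgroup)
      (fun x hx => hKM (hIK hx)) hI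
  refine ⟨M, hMopen, ⟨fun hTop => hMmem (hTop ▸ trivial), fun b hb => ?_⟩, hKM⟩
  by_contra hbne
  have hbmem : (1 : R) ∉ b := fun h1b => hbne (smod_eq_top_of_one_mem h1b)
  exact hb.ne (le_antisymm (hMmax hbmem hb.le) hb.le).symm

variable [T2Space R]

/-- For a nonzero idempotent `e` there is an open maximal right ideal avoiding `e`. -/
lemma exists_open_coatom_not_mem (hRL : IsRightLinearTopology R) {e : R}
    (hee : e * e = e) (hne : e ≠ 0) :
    ∃ M : Submodule Rᵐᵒᵖ R, IsOpen (M : Set R) ∧ IsCoatom M ∧ e ∉ M := by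
  -- an open right ideal I with e ∉ eI
  have hI : ∃ I : Submodule Rᵐᵒᵖ R, IsOpen (I : Set R) ∧ ∀ i ∈ I, e ≠ e * i := by
    by_contra h
    push_neg at h
    have hU : ({e}ᶜ : Set R) ∈ nhds (0 : R) := by
      refine IsOpen.mem_nhds isOpen_compl_singleton ?_
      simpa using fun h0 => hne h0.symm
    have hV : (fun x : R => e * x) ⁻¹' {e}ᶜ ∈ nhds (0 : R) := by
      have hcont : Filter.Tendsto (fun x : R => e * x) (nhds 0) (nhds 0) := by
        simpa using (continuous_mul_left e).tendsto (0 : R)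
      exact hcont hU
    obtain ⟨I, hIopen, hIsub⟩ := hRL _ hV
    obtain ⟨i, hiI, hei⟩ := h I hIopen
    exact (hIsub hiI) (by simpa using hei.symm)
  obtain ⟨I, hIopen, hIe⟩ := hI
  set K := Submodule.span Rᵐᵒᵖ {1 - e} ⊔ I.map (lmulL e) with hK
  have hIK : I ≤ K := by
    intro i hi
    have hrepr : i = (1 - e) * i + e * i := by
      rw [sub_mul, one_mul, sub_add_cancel]
    rw [hrepr]
    refine K.add_mem (Submodule.mem_sup_left ?_) (Submodule.mem_sup_right ?_)
    · exact Submodule.mem_span_singleton.2 ⟨op i, by rw [op_smul_eq_mul]⟩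
    · exact Submodule.mem_map_of_mem hi
  have h1K : (1 : R) ∉ K := by
    intro h1
    obtain ⟨a, haspan, b, hbmap, hab⟩ := Submodule.mem_sup.1 h1
    obtain ⟨c, hc⟩ := Submodule.mem_span_singleton.1 haspan
    obtain ⟨i, hiI, hib⟩ := Submodule.mem_map.1 hbmap
    -- 1 = (1-e)*c.unop + e*i ; multiply by e on the left
    have : e = e * i := by
      have ha' : a = (1 - e) * unop c := by rw [← hc, MulOpposite.smul_eq_mul_unop]
      have hb' : b = e * i := by rw [← hib, lmulL_apply]
      have h1' : (1 : R) = (1 - e) * unop c + e * i := by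
        rw [ha', hb'] at hab; exact hab.symm
      calc e = e * 1 := by rw [mul_one]
        _ = e * ((1 - e) * unop c + e * i) := by rw [← h1']
        _ = (e * (1 - e)) * unop c + (e * e) * i := by rw [mul_add, mul_assoc, mul_assoc]
        _ = e * i := by rw [mul_sub, mul_one, hee, sub_self, zero_mul, zero_add]
    exact hIe i hiI this
  obtain ⟨M, hMopen, hMco, hKM⟩ := exists_open_coatom_ge h1K hIK hIopen
  refine ⟨M, hMopen, hMco, fun heM => ?_⟩
  have h1e : (1 : R) - e ∈ M :=
    hKM (Submodule.mem_sup_left (Submodule.mem_span_singleton_self _))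
  have : (1 : R) ∈ M := by
    have := M.add_mem h1e heM; simpa using this
  exact hMco.1 (smod_eq_top_of_one_mem this)

lemma idem_notin_tj (hRL : IsRightLinearTopology R) {e : R} (hee : e * e = e) (hne : e ≠ 0) :
    e ∉ topJacobson R := by
  obtain ⟨M, hMo, hMco, heM⟩ := exists_open_coatom_not_mem hRL hee hne
  exact fun h => heM (mem_tj_iff.1 h M hMo hMco)

lemma tj_mul_left (r : R) {a : R} (ha : a ∈ topJacobson R) : r * a ∈ topJacobson R := by
  rw [mem_tj_iff]
  intro M hMo hMco
  by_cases hrM : r ∈ M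
  · have := M.smul_mem (op a) hrM
    rwa [op_smul_eq_mul] at this
  · set M' := M.comap (lmulL r) with hM'
    have hM'o : IsOpen (M' : Set R) := by
      have : (M' : Set R) = (fun x : R => r * x) ⁻¹' M := rfl
      rw [this]
      exact hMo.preimage (continuous_mul_left r)
    have hM'ne : M' ≠ ⊤ := by
      intro h
      apply hrM
      have h1 : (1 : R) ∈ M' := h ▸ trivial
      have := Submodule.mem_comap.1 h1
      rwa [lmulL_apply, mul_one] at this
    have hM'co : IsCoatom M' := by
      refine ⟨hM'ne, fun J hJ => ?_⟩
      obtain ⟨x, hxJ, hxM'⟩ := SetLike.exists_of_lt hJ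
      have hrxM : r * x ∉ M := hxM'
      have hlt : M < M ⊔ Submodule.span Rᵐᵒᵖ {r * x} := by
        refine lt_of_le_of_ne le_sup_left fun hEq => hrxM ?_
        have : r * x ∈ M ⊔ Submodule.span Rᵐᵒᵖ {r * x} :=
          Submodule.mem_sup_right (Submodule.mem_span_singleton_self _)
        rwa [← hEq] at this
      have hsup : M ⊔ Submodule.span Rᵐᵒᵖ {r * x} = ⊤ := hMco.2 _ hlt
      have hrmem : r ∈ M ⊔ Submodule.span Rᵐᵒᵖ {r * x} := by rw [hsup]; trivial
      obtain ⟨m, hm, t, ht, hmt⟩ := Submodule.mem_sup.1 hrmem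
      obtain ⟨c, hc⟩ := Submodule.mem_span_singleton.1 ht
      have ht' : t = r * (x * unop c) := by
        rw [← hc, MulOpposite.smul_eq_mul_unop, mul_assoc]
      have hmm : r * (1 - x * unop c) ∈ M := by
        have heq : r * (1 - x * unop c) = m := by
          rw [mul_sub, mul_one, ← ht', ← hmt, add_sub_cancel_right]
        rw [heq]; exact hm
      have h1M' : (1 : R) - x * unop c ∈ M' := by
        refine Submodule.mem_comap.2 ?_
        rwa [lmulL_apply]
      have hxsJ : x * unop c ∈ J := by
        have := J.smul_mem (op c.unop) hxJ
        rwa [op_smul_eq_mul] at this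
      have h1J : (1 : R) ∈ J := by
        have := J.add_mem (hJ.le h1M') hxsJ
        simpa using this
      exact smod_eq_top_of_one_mem h1J
    have haM' : a ∈ M' := mem_tj_iff.1 ha M' hM'o hM'co
    have := Submodule.mem_comap.1 haM'
    rwa [lmulL_apply] at this

lemma tj_zero : (0 : R) ∈ topJacobson R :=
  mem_tj_iff.2 fun I _ _ => I.zero_mem

lemma tj_add {a b : R} (ha : a ∈ topJacobson R) (hb : b ∈ topJacobson R) :
    a + b ∈ topJacobson R :=
  mem_tj_iff.2 fun I h1 h2 => I.add_mem (mem_tj_iff.1 ha I h1 h2) (mem_tj_iff.1 hb I h1 h2)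

lemma tj_neg {a : R} (ha : a ∈ topJacobson R) : -a ∈ topJacobson R :=
  mem_tj_iff.2 fun I h1 h2 => I.neg_mem (mem_tj_iff.1 ha I h1 h2)

lemma tj_sub {a b : R} (ha : a ∈ topJacobson R) (hb : b ∈ topJacobson R) :
    a - b ∈ topJacobson R := by
  rw [sub_eq_add_neg]; exact tj_add ha (tj_neg hb)

lemma tj_mul_right {a : R} (r : R) (ha : a ∈ topJacobson R) : a * r ∈ topJacobson R :=
  mem_tj_iff.2 fun I h1 h2 => by
    have := I.smul_mem (op r) (mem_tj_iff.1 ha I h1 h2)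
    rwa [op_smul_eq_mul] at this

/-- corner inverse: if `c ∈ eRe` is congruent to `e` mod the topological Jacobson radical,
and `e` is a local idempotent, then `c` is invertible in the corner ring `eRe`. -/
lemma corner_inv (hRL : IsRightLinearTopology R) {e c : R} (hl : IsLocalIdempotent e)
    (hec : e * c = c) (hce : c * e = c) (hc : e - c ∈ topJacobson R) :
    ∃ κ : R, e * κ = κ ∧ κ * e = κ ∧ c * κ = e ∧ κ * c = e := by
  obtain ⟨heIdem, heNe, heDich⟩ := hl
  have hee : e * e = e := heIdem
  have h1 : e * (e - c) = e - c := by rw [mul_sub, hee, hec]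
  have hx : e * (e - c) * e = e - c := by rw [h1, sub_mul, hee, hce]
  rcases heDich (e - c) with ⟨y, hy1, _hy2⟩ | ⟨y, hy1, hy2⟩
  · exfalso
    rw [hx] at hy1
    obtain ⟨M, hMo, hMco, heM⟩ := exists_open_coatom_not_mem hRL hee heNe
    have hcM : e - c ∈ M := mem_tj_iff.1 hc M hMo hMco
    apply heM
    rw [← hy1]
    have := M.smul_mem (op (e * y * e)) hcM
    rwa [op_smul_eq_mul] at this
  · rw [hx, sub_sub_cancel] at hy1 hy2
    refine ⟨e * y * e, ?_, ?_, hy1, hy2⟩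
    · rw [← mul_assoc, ← mul_assoc, hee]
    · rw [mul_assoc, hee]

lemma local_transport {R : Type u} [Ring R] {e X Y : R} (hl : IsLocalIdempotent e)
    (hYX : Y * X = e) (hXe : X * e = X) (heY : e * Y = Y) :
    IsLocalIdempotent (X * Y) := by
  obtain ⟨heIdem, heNe, heDich⟩ := hl
  have hee : e * e = e := heIdem
  have hYXw : ∀ w : R, Y * (X * w) = e * w := fun w => by rw [← mul_assoc, hYX]
  have hidem : (X * Y) * (X * Y) = X * Y := by
    simp only [mul_assoc, hYXw, heY]
  have hne0 : X * Y ≠ 0 := by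
    intro h0
    apply heNe
    have he2 : e = Y * ((X * Y) * X) := by
      calc e = e * e := hee.symm
        _ = (Y * X) * (Y * X) := by rw [hYX]
        _ = Y * ((X * Y) * X) := by simp only [mul_assoc]
    rw [h0, zero_mul, mul_zero] at he2
    exact he2
  refine ⟨hidem, hne0, fun x => ?_⟩
  have hExE : (X * Y) * x * (X * Y) = X * ((Y * (x * X)) * Y) := by
    simp only [mul_assoc]
  set s : R := Y * (x * X) with hs
  have hes : e * s = s := by rw [hs, ← mul_assoc, heY]
  have hesw : ∀ w : R, e * (s * w) = s * w := fun w => by rw [← mul_assoc, hes]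
  have hse : s * e = s := by rw [hs, mul_assoc, mul_assoc, hXe]
  have hese : e * s * e = s := by rw [hes, hse]
  rcases heDich s with ⟨y1, ha1, ha2⟩ | ⟨y1, hb1, hb2⟩
  · left
    rw [hese] at ha1 ha2
    set c1 : R := e * y1 * e with hc1
    have hec1 : e * c1 = c1 := by rw [hc1, ← mul_assoc, ← mul_assoc, hee]
    have hec1w : ∀ w : R, e * (c1 * w) = c1 * w := fun w => by rw [← mul_assoc, hec1]
    have ha1w : ∀ w : R, s * (c1 * w) = e * w := fun w => by rw [← mul_assoc, ha1]
    have ha2w : ∀ w : R, c1 * (s * w) = e * w := fun w => by rw [← mul_assoc, ha2]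
    have hEyE : (X * Y) * (X * (c1 * Y)) * (X * Y) = X * (c1 * Y) := by
      simp only [mul_assoc, hYXw, hec1w, heY]
    refine ⟨X * (c1 * Y), ?_, ?_⟩
    · rw [hExE, hEyE]
      simp only [mul_assoc, hYXw, hec1w, ha1w, heY]
    · rw [hExE, hEyE]
      simp only [mul_assoc, hYXw, hesw, ha2w, heY]
  · right
    rw [hese] at hb1 hb2
    set c1 : R := e * y1 * e with hc1
    have hec1 : e * c1 = c1 := by rw [hc1, ← mul_assoc, ← mul_assoc, hee]
    have hec1w : ∀ w : R, e * (c1 * w) = c1 * w := fun w => by rw [← mul_assoc, hec1]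
    have hb1w : ∀ w : R, (e - s) * (c1 * w) = e * w := fun w => by rw [← mul_assoc, hb1]
    have hb2w : ∀ w : R, c1 * ((e - s) * w) = e * w := fun w => by rw [← mul_assoc, hb2]
    have hees : e * (e - s) = e - s := by rw [mul_sub, hee, hes]
    have heesw : ∀ w : R, e * ((e - s) * w) = (e - s) * w := fun w => by rw [← mul_assoc, hees]
    have hEyE : (X * Y) * (X * (c1 * Y)) * (X * Y) = X * (c1 * Y) := by
      simp only [mul_assoc, hYXw, hec1w, heY]
    have hB0 : X * ((e - s) * Y) = (X * Y) - (X * Y) * x * (X * Y) := by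
      rw [sub_mul, mul_sub, heY, hExE]
    refine ⟨X * (c1 * Y), ?_, ?_⟩
    · rw [← hB0, hEyE]
      simp only [mul_assoc, hYXw, hec1w, hb1w, heY]
    · rw [← hB0, hEyE]
      simp only [mul_assoc, hYXw, heesw, hb2w, heY]

end Lemmas

section RingIds
variable {S : Type u} [Ring S]

lemma ringid1 (g p : S) :
    (g - p) * (g - p) - (g - p) = ((g * g - g) + (p * p - p)) - ((g * p - p) + (p * g - p)) := by
  noncomm_ring

lemma ringid2 (g p : S) : p * (g - p) = (p * g - p) - (p * p - p) := by noncomm_ring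

lemma ringid3 (g p : S) : (g - p) * p = (g * p - p) - (p * p - p) := by noncomm_ring

lemma ringid4 (g p : S) : g - (p + (g - p)) = 0 := by noncomm_ring

lemma ringid5 {e : S} (c : S) (hee : e * e = e) :
    e = c * c - c * (c - e) - (c - e) * c + (c - e) * (c - e) := by
  have h : c * c - c * (c - e) - (c - e) * c + (c - e) * (c - e) = e * e := by noncomm_ring
  rw [h, hee]

lemma ringid6 (E p g : S) : E - g = (E - p) - (g - p) := by noncomm_ring

end RingIds

section MainStep
variable {R : Type u} [Ring R] [TopologicalSpace R] [IsTopologicalRing R] [T2Space R]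

/-- Key lifting step: any `g` which is a nonzero idempotent modulo the topological Jacobson
radical, and which is primitive modulo it, lifts to a local idempotent congruent to it,
of the form `g * av = bv * g`. -/
lemma main_step (hRL : IsRightLinearTopology R) {Z : Type u} {ee : Z → R}
    (hloc : ∀ z, IsLocalIdempotent (ee z)) (hsum : HasSum ee 1)
    {g : R} (hg1 : g * g - g ∈ topJacobson R) (hg2 : g ∉ topJacobson R)
    (hpr : ∀ a b : R, a * a - a ∈ topJacobson R → b * b - b ∈ topJacobson R →
      a * b ∈ topJacobson R → b * a ∈ topJacobson R → g - (a + b) ∈ topJacobson R →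
      a ∈ topJacobson R ∨ b ∈ topJacobson R) :
    ∃ E av bv : R, IsLocalIdempotent E ∧ E - g ∈ topJacobson R ∧ E = g * av ∧ E = bv * g := by
  -- Step 1: an open coatom avoiding `g`.
  have h1 : ∃ M : Submodule Rᵐᵒᵖ R, IsOpen (M : Set R) ∧ IsCoatom M ∧ g ∉ M := by
    by_contra h
    push_neg at h
    exact hg2 (mem_tj_iff.2 fun I hIo hIc => h I hIo hIc)
  obtain ⟨M, hMo, hMco, hgM⟩ := h1
  -- Step 2: some coordinate of `g` survives in `R/M`.
  have h2 : ∃ z, g * ee z ∉ M := by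
    by_contra h
    push_neg at h
    have hs2 : HasSum (fun z => g * ee z) g := by simpa using hsum.mul_left g
    have hVopen : IsOpen {x : R | g - x ∈ M} :=
      hMo.preimage (continuous_const.sub continuous_id)
    have hV : {x : R | g - x ∈ M} ∈ nhds g := hVopen.mem_nhds (by simpa using M.zero_mem)
    have hEv : ∀ᶠ F in Filter.atTop, g - (∑ z ∈ F, g * ee z) ∈ M := hs2 hV
    obtain ⟨F, hF⟩ := hEv.exists
    have hsumM : (∑ z ∈ F, g * ee z) ∈ M := Submodule.sum_mem _ fun z _ => h z
    exact hgM (by simpa using M.add_mem hF hsumM)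
  obtain ⟨z, hwM⟩ := h2
  obtain ⟨heIdem, heNe, heDich⟩ := hloc z
  set e : R := ee z with he_def
  have hee : e * e = e := heIdem
  have heLw : ∀ w : R, e * (e * w) = e * w := fun w => by rw [← mul_assoc, hee]
  -- Step 3: decomposition `g ≡ (g*e)*y mod M`.
  have hlt : M < M ⊔ Submodule.span Rᵐᵒᵖ {g * e} := by
    refine lt_of_le_of_ne le_sup_left fun hEq => hwM ?_
    have : g * e ∈ M ⊔ Submodule.span Rᵐᵒᵖ {g * e} :=
      Submodule.mem_sup_right (Submodule.mem_span_singleton_self _)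
    rwa [← hEq] at this
  have hsup : M ⊔ Submodule.span Rᵐᵒᵖ {g * e} = ⊤ := hMco.2 _ hlt
  have hgmem : g ∈ M ⊔ Submodule.span Rᵐᵒᵖ {g * e} := by rw [hsup]; trivial
  obtain ⟨m, hm, t, ht, hmt⟩ := Submodule.mem_sup.1 hgmem
  obtain ⟨cop, hcop⟩ := Submodule.mem_span_singleton.1 ht
  set y : R := unop cop with hy_def
  have hty : t = g * e * y := by rw [← hcop, MulOpposite.smul_eq_mul_unop]
  have hgm : g - g * e * y ∈ M := by
    have heq : g - g * e * y = m := by rw [← hty, ← hmt, add_sub_cancel_right]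
    rw [heq]; exact hm
  -- Step 4: `(g*e) - (g*e) * Q ∈ M` where `Q = e*(y*g)*e`.
  have hQM : g * e - g * e * (e * (y * g) * e) ∈ M := by
    have hA : (g - g * e * y) * (g * e) ∈ M := by
      have := M.smul_mem (op (g * e)) hgm
      rwa [op_smul_eq_mul] at this
    have hB : (g * g - g) * e ∈ M := mem_tj_iff.1 (tj_mul_right e hg1) M hMo hMco
    have hkey : g * e - g * e * (e * (y * g) * e)
        = (g - g * e * y) * (g * e) - (g * g - g) * e := by
      simp only [sub_mul, mul_sub, mul_assoc, heLw]
      abel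
    rw [hkey]; exact M.sub_mem hA hB
  -- Step 5: local dichotomy at `y*g`; the second case is impossible.
  rcases heDich (y * g) with ⟨k0, hk1, hk2⟩ | ⟨k2, hk1', _hk2'⟩
  swap
  · exfalso
    have heκ : e * (e * k2 * e) = e * k2 * e := by
      rw [← mul_assoc, ← mul_assoc, hee]
    have hwe : (g * e) * e = g * e := by rw [mul_assoc, hee]
    have h3 := hk1'
    rw [sub_mul, heκ] at h3
    have hQκ : (e * (y * g) * e) * (e * k2 * e) = (e * k2 * e) - e := by
      have h4 := (sub_eq_iff_eq_add').1 h3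
      exact (eq_sub_of_add_eq h4.symm)
    have hfin : (g * e - g * e * (e * (y * g) * e)) * (e * k2 * e) = g * e := by
      rw [sub_mul, mul_assoc (g * e) (e * (y * g) * e) (e * k2 * e), hQκ, mul_sub, hwe]
      abel
    apply hwM
    rw [← hfin]
    have := M.smul_mem (op (e * k2 * e)) hQM
    rwa [op_smul_eq_mul] at this
  -- Step 6: the main construction.
  -- notation (as plain terms): K = e*(k0*e), X = g*K, Y = e*(y*g), c = Y*X
  · have hk1n : e * (y * g) * e * (e * (k0 * e)) = e := by
      simpa only [mul_assoc] using hk1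
    have hk1n' : e * (y * (g * (e * (k0 * e)))) = e := by
      simpa only [mul_assoc, heLw] using hk1
    -- `c = Y*X ∈ eRe` and `c ≡ e mod 𝔥`
    have hec : e * ((e * (y * g)) * (g * (e * (k0 * e)))) = (e * (y * g)) * (g * (e * (k0 * e))) := by
      simp only [mul_assoc, heLw]
    have hce : ((e * (y * g)) * (g * (e * (k0 * e)))) * e = (e * (y * g)) * (g * (e * (k0 * e))) := by
      simp only [mul_assoc, hee]
    have hcetj : e - (e * (y * g)) * (g * (e * (k0 * e))) ∈ topJacobson R := by
      have heq : e - (e * (y * g)) * (g * (e * (k0 * e)))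
          = -((e * y) * ((g * g - g) * (e * (k0 * e)))) := by
        simp only [mul_assoc, mul_sub, sub_mul, neg_sub, hk1n']
      rw [heq]
      exact tj_neg (tj_mul_left _ (tj_mul_right _ hg1))
    obtain ⟨κ, heκ, hκe, hcκ, hκc⟩ := corner_inv hRL (hloc z) hec hce hcetj
    -- the lifted idempotent E := X * (κ * Y)
    have hT1 : (κ * (e * (y * g))) * (g * (e * (k0 * e))) = e := by
      rw [mul_assoc]; exact hκc
    have hT2 : (g * (e * (k0 * e))) * e = g * (e * (k0 * e)) := by
      simp only [mul_assoc, hee]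
    have hT3 : e * (κ * (e * (y * g))) = κ * (e * (y * g)) := by
      rw [← mul_assoc, heκ]
    have hEloc : IsLocalIdempotent ((g * (e * (k0 * e))) * (κ * (e * (y * g)))) :=
      local_transport (by exact ⟨heIdem, heNe, heDich⟩) hT1 hT2 hT3
    -- congruence E ≡ g mod 𝔥, via p := X * Y
    have heYY : e * (e * (y * g)) = e * (y * g) := heLw _
    have hP1 : (g * (e * (k0 * e))) * (κ * (e * (y * g)))
        - (g * (e * (k0 * e))) * (e * (y * g)) ∈ topJacobson R := by
      have hκetj : κ - e ∈ topJacobson R := by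
        have hκme : κ * (e - (e * (y * g)) * (g * (e * (k0 * e)))) = κ - e := by
          rw [mul_sub, hκe, hκc]
        rw [← hκme]
        exact tj_mul_left κ hcetj
      have heq : (g * (e * (k0 * e))) * (κ * (e * (y * g)))
          - (g * (e * (k0 * e))) * (e * (y * g))
          = (g * (e * (k0 * e))) * ((κ - e) * (e * (y * g))) := by
        rw [sub_mul, mul_sub, heYY]
      rw [heq]
      exact tj_mul_left _ (tj_mul_right _ hκetj)
    have hP2 : ((g * (e * (k0 * e))) * (e * (y * g))) * ((g * (e * (k0 * e))) * (e * (y * g)))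
        - (g * (e * (k0 * e))) * (e * (y * g)) ∈ topJacobson R := by
      have heq : ((g * (e * (k0 * e))) * (e * (y * g))) * ((g * (e * (k0 * e))) * (e * (y * g)))
          - (g * (e * (k0 * e))) * (e * (y * g))
          = (g * (e * (k0 * e)))
              * (((e * (y * g)) * (g * (e * (k0 * e))) - e) * (e * (y * g))) := by
        simp only [mul_assoc, mul_sub, sub_mul, heLw]
      rw [heq]
      refine tj_mul_left _ (tj_mul_right _ ?_)
      rw [← neg_sub]; exact tj_neg hcetj
    have hP3 : g * ((g * (e * (k0 * e))) * (e * (y * g)))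
        - (g * (e * (k0 * e))) * (e * (y * g)) ∈ topJacobson R := by
      have heq : g * ((g * (e * (k0 * e))) * (e * (y * g)))
          - (g * (e * (k0 * e))) * (e * (y * g))
          = ((g * g - g) * (e * (k0 * e))) * (e * (y * g)) := by
        simp only [mul_assoc, mul_sub, sub_mul]
      rw [heq]
      exact tj_mul_right _ (tj_mul_right _ hg1)
    have hP4 : ((g * (e * (k0 * e))) * (e * (y * g))) * g
        - (g * (e * (k0 * e))) * (e * (y * g)) ∈ topJacobson R := by
      have heq : ((g * (e * (k0 * e))) * (e * (y * g))) * g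
          - (g * (e * (k0 * e))) * (e * (y * g))
          = (g * (e * (k0 * e))) * ((e * y) * (g * g - g)) := by
        simp only [mul_assoc, mul_sub, sub_mul]
      rw [heq]
      exact tj_mul_left _ (tj_mul_left _ hg1)
    -- hprim dichotomy with a := p, b := g - p
    have hcase : (g * (e * (k0 * e))) * (e * (y * g)) ∈ topJacobson R ∨
        g - (g * (e * (k0 * e))) * (e * (y * g)) ∈ topJacobson R := by
      refine hpr _ _ hP2 ?_ ?_ ?_ ?_
      · rw [ringid1 g ((g * (e * (k0 * e))) * (e * (y * g)))]
        exact tj_sub (tj_add hg1 hP2) (tj_add hP3 hP4)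
      · rw [ringid2 g ((g * (e * (k0 * e))) * (e * (y * g)))]
        exact tj_sub hP4 hP2
      · rw [ringid3 g ((g * (e * (k0 * e))) * (e * (y * g)))]
        exact tj_sub hP3 hP2
      · rw [ringid4 g ((g * (e * (k0 * e))) * (e * (y * g)))]
        exact tj_zero
    -- p ∈ 𝔥 is impossible
    have hgp : g - (g * (e * (k0 * e))) * (e * (y * g)) ∈ topJacobson R := by
      rcases hcase with hcase | hcase
      · exfalso
        have hcc : ((e * (y * g)) * (g * (e * (k0 * e))))
            * ((e * (y * g)) * (g * (e * (k0 * e)))) ∈ topJacobson R := by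
          have heq : ((e * (y * g)) * (g * (e * (k0 * e))))
              * ((e * (y * g)) * (g * (e * (k0 * e))))
              = (e * (y * g)) * (((g * (e * (k0 * e))) * (e * (y * g))) * (g * (e * (k0 * e)))) := by
            simp only [mul_assoc]
          rw [heq]
          exact tj_mul_left _ (tj_mul_right _ hcase)
        have h5 := ringid5 ((e * (y * g)) * (g * (e * (k0 * e)))) hee
        have hcme : (e * (y * g)) * (g * (e * (k0 * e))) - e ∈ topJacobson R := by
          rw [← neg_sub]; exact tj_neg hcetj
        have hetj : e ∈ topJacobson R := by
          rw [h5]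
          exact tj_add (tj_sub (tj_sub hcc (tj_mul_left _ hcme)) (tj_mul_right _ hcme))
            (tj_mul_right _ hcme)
        exact idem_notin_tj hRL hee heNe hetj
      · exact hcase
    -- put everything together
    refine ⟨(g * (e * (k0 * e))) * (κ * (e * (y * g))),
      (e * (k0 * e)) * (κ * (e * (y * g))), (g * (e * (k0 * e))) * (κ * (e * y)),
      hEloc, ?_, by rw [mul_assoc], by simp only [mul_assoc]⟩
    rw [ringid6 _ ((g * (e * (k0 * e))) * (e * (y * g))) g]
    exact tj_sub hP1 hgp

end MainStep

section Assembly
variable {R : Type u} [Ring R] [TopologicalSpace R] [IsTopologicalRing R] [T2Space R]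

lemma tj_sum {ι : Type*} (T : Finset ι) (h : ι → R)
    (hh : ∀ i ∈ T, h i ∈ topJacobson R) : (∑ i ∈ T, h i) ∈ topJacobson R :=
  Finset.sum_induction h (· ∈ topJacobson R) (fun _ _ => tj_add) tj_zero hh

end Assembly


theorem lift_finite_orthogonal_primitive_idempotents
    (R : Type u) [Ring R] [UniformSpace R] [IsUniformAddGroup R] [IsTopologicalRing R]
    [T2Space R] [CompleteSpace R] (hRL : IsRightLinearTopology R)
    (hSP : IsTopSemiperfect R)
    (W : Type u) [Finite W] (f : W → R)
    -- the residue of each `f w` modulo the topological Jacobson radical is an idempotent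
    (hidem : ∀ w, f w * f w - f w ∈ topJacobson R)
    -- the residues are pairwise orthogonal
    (horth : ∀ w w', w ≠ w' → f w * f w' ∈ topJacobson R)
    -- the residues are nonzero
    (hne : ∀ w, f w ∉ topJacobson R)
    -- the residues are primitive idempotents of `R/𝔥`: they cannot be written as a sum of
    -- two nonzero orthogonal idempotents of `R/𝔥`
    (hprim : ∀ w, ∀ a b : R, a * a - a ∈ topJacobson R → b * b - b ∈ topJacobson R →
      a * b ∈ topJacobson R → b * a ∈ topJacobson R → f w - (a + b) ∈ topJacobson R →
      a ∈ topJacobson R ∨ b ∈ topJacobson R) :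
    ∃ e : W → R, (∀ w, IsLocalIdempotent (e w)) ∧
      (∀ w w', w ≠ w' → e w * e w' = 0) ∧
      ∀ w, e w - f w ∈ topJacobson R := by
  classical
  obtain ⟨Z, ee, _htend, hloc, _horthZ, hsum⟩ := hSP
  have key : ∀ S : Finset W,
      ∃ ε : W → R, (∀ w ∈ S, IsLocalIdempotent (ε w)) ∧
        (∀ w ∈ S, ∀ w' ∈ S, w ≠ w' → ε w * ε w' = 0) ∧
        (∀ w ∈ S, ε w - f w ∈ topJacobson R) ∧ (∀ w ∉ S, ε w = 0) := by
    intro S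
    induction S using Finset.induction_on with
    | empty =>
      exact ⟨fun _ => 0, by simp, by simp, by simp, fun _ _ => rfl⟩
    | @insert w0 S hw0S ih =>
      obtain ⟨ε, hloc', horth', hcong', hzero'⟩ := ih
      have hWne : ∀ w ∈ S, w ≠ w0 := fun w hw h => hw0S (h ▸ hw)
      set sS : R := ∑ w ∈ S, ε w with hsS
      have hεS : ∀ w ∈ S, ε w * sS = ε w := by
        intro w hw
        rw [hsS, Finset.mul_sum,
          Finset.sum_eq_single_of_mem w hw fun b hb hbw => horth' w hw b hb (Ne.symm hbw)]
        exact (hloc' w hw).1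
      have hSε : ∀ w ∈ S, sS * ε w = ε w := by
        intro w hw
        rw [hsS, Finset.sum_mul,
          Finset.sum_eq_single_of_mem w hw fun b hb hbw => horth' b hb w hw hbw]
        exact (hloc' w hw).1
      have hSS : sS * sS = sS := by
        conv_lhs => rw [hsS, Finset.sum_mul]
        rw [Finset.sum_congr rfl fun w hw => hεS w hw]
      set u : R := 1 - sS with hu
      have huu : u * u = u := by
        rw [hu, sub_mul, one_mul, mul_sub, mul_one, hSS]
        abel
      have huε : ∀ w ∈ S, u * ε w = 0 := by
        intro w hw
        rw [hu, sub_mul, one_mul, hSε w hw, sub_self]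
      have hεu : ∀ w ∈ S, ε w * u = 0 := by
        intro w hw
        rw [hu, mul_sub, mul_one, hεS w hw, sub_self]
      have hStj : sS * f w0 ∈ topJacobson R := by
        rw [hsS, Finset.sum_mul]
        refine tj_sum _ _ fun w hw => ?_
        have heq : ε w * f w0 = (ε w - f w) * f w0 + f w * f w0 := by noncomm_ring
        rw [heq]
        exact tj_add (tj_mul_right _ (hcong' w hw)) (horth w w0 (hWne w hw))
      have hftj : f w0 * sS ∈ topJacobson R := by
        rw [hsS, Finset.mul_sum]
        refine tj_sum _ _ fun w hw => ?_
        have heq : f w0 * ε w = f w0 * (ε w - f w) + f w0 * f w := by noncomm_ring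
        rw [heq]
        exact tj_add (tj_mul_left _ (hcong' w hw)) (horth w0 w fun h => hWne w hw h.symm)
      -- the element to lift
      have hgf : u * f w0 * u - f w0 ∈ topJacobson R := by
        have heq : u * f w0 * u - f w0 = sS * f w0 * sS - f w0 * sS - sS * f w0 := by
          rw [hu]; noncomm_ring
        rw [heq]
        exact tj_sub (tj_sub (tj_mul_right _ hStj) hftj) hStj
      have hfuf : f w0 * u * f w0 - f w0 ∈ topJacobson R := by
        have heq : f w0 * u * f w0 - f w0 = (f w0 * f w0 - f w0) - (f w0 * sS) * f w0 := by
          rw [hu]; noncomm_ring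
        rw [heq]
        exact tj_sub (hidem w0) (tj_mul_right _ hftj)
      have hgidem : (u * f w0 * u) * (u * f w0 * u) - (u * f w0 * u) ∈ topJacobson R := by
        have hA : (u * f w0 * u) * (u * f w0 * u) = u * (f w0 * ((u * u) * (f w0 * u))) := by
          simp only [mul_assoc]
        have hA2 : (u * f w0 * u) * (u * f w0 * u) - (u * f w0 * u)
            = u * ((f w0 * u * f w0 - f w0) * u) := by
          rw [hA, huu]; noncomm_ring
        rw [hA2]
        exact tj_mul_left _ (tj_mul_right _ hfuf)
      have hgne : u * f w0 * u ∉ topJacobson R := by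
        intro h
        apply hne w0
        have heq : f w0 = (u * f w0 * u) - (u * f w0 * u - f w0) := by abel
        rw [heq]
        exact tj_sub h hgf
      have hgpr : ∀ a b : R, a * a - a ∈ topJacobson R → b * b - b ∈ topJacobson R →
          a * b ∈ topJacobson R → b * a ∈ topJacobson R →
          (u * f w0 * u) - (a + b) ∈ topJacobson R →
          a ∈ topJacobson R ∨ b ∈ topJacobson R := by
        intro a b h1 h2 h3 h4 h5
        refine hprim w0 a b h1 h2 h3 h4 ?_
        have heq : f w0 - (a + b) = -(u * f w0 * u - f w0) + (u * f w0 * u - (a + b)) := by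
          abel
        rw [heq]
        exact tj_add (tj_neg hgf) h5
      obtain ⟨E, av, bv, hEloc, hEg, hEav, hEbv⟩ :=
        main_step hRL hloc hsum hgidem hgne hgpr
      refine ⟨Function.update ε w0 E, ?_, ?_, ?_, ?_⟩
      · intro w hw
        rcases Finset.mem_insert.1 hw with rfl | hwS
        · rwa [Function.update_self]
        · rw [Function.update_of_ne (hWne w hwS)]
          exact hloc' w hwS
      · intro w hw w' hw' hww'
        rcases Finset.mem_insert.1 hw with rfl | hwS
        · rcases Finset.mem_insert.1 hw' with rfl | hw'S
          · exact absurd rfl hww'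
          · rw [Function.update_self, Function.update_of_ne (hWne w' hw'S)]
            rw [hEbv]
            have heq : bv * (u * f w * u) * ε w' = (bv * (u * f w)) * (u * ε w') := by
              simp only [mul_assoc]
            rw [heq, huε w' hw'S, mul_zero]
        · rcases Finset.mem_insert.1 hw' with rfl | hw'S
          · rw [Function.update_self, Function.update_of_ne (hWne w hwS)]
            rw [hEav]
            have heq : ε w * (u * f w' * u * av) = (ε w * u) * (f w' * (u * av)) := by
              simp only [mul_assoc]
            rw [heq, hεu w hwS, zero_mul]
          · rw [Function.update_of_ne (hWne w hwS), Function.update_of_ne (hWne w' hw'S)]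
            exact horth' w hwS w' hw'S hww'
      · intro w hw
        rcases Finset.mem_insert.1 hw with rfl | hwS
        · rw [Function.update_self]
          have heq : E - f w = (E - u * f w * u) + (u * f w * u - f w) := by abel
          rw [heq]
          exact tj_add hEg hgf
        · rw [Function.update_of_ne (hWne w hwS)]
          exact hcong' w hwS
      · intro w hw
        rw [Finset.mem_insert, not_or] at hw
        rw [Function.update_of_ne hw.1]
        exact hzero' w hw.2
  have := Fintype.ofFinite W
  obtain ⟨ε, h1, h2, h3, _⟩ := key Finset.univ
  exact ⟨ε, fun w => h1 w (Finset.mem_univ w),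
    fun w w' hww' => h2 w (Finset.mem_univ w) w' (Finset.mem_univ w') hww',
    fun w => h3 w (Finset.mem_univ w)⟩
end
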